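/- arXiv:1006.2696 — 3 statements merged into one kernel-verified Lean document; each statement's English description precedes it below -/
import Mathlib

section
/- Work in the ring S of formal power series over ℚ in four variables u, v, y, t. Let G ∈ S be the series whose coefficient of u^a v^ℓ y^b t^n equals the number of ascent sequences of length n with a ascents, last letter ℓ, and b equal pairs (coefficient of t^0 being 1). Set Δ_0 = Δ̄_0 = 1 and, for k ≥ 1, Δ_k = (1−ty)^k(1−u) + u(1+t−ty)^k, Δ̄_k = (1−ty)^k(1−uv) + uv(1+t−ty)^k, Γ_k = u(1+t−ty)^k Δ_k^{−1}, and Γ̄_k = uv(1+t−ty)^k Δ̄_k^{−1} (each Δ_k and Δ̄_k has constant term 1, hence is invertible in S). Let D = v − 1 − t − tyv + ty + tuv, which has constant term −1 and hence is invertible in S. Then G = 1 + t·D^{−1}·( (v−1) − t·Σ_{n≥0} (1−ty)^n (1+t−ty)^n [ (1−u)·Γ₁⋯Γ_n·Δ_n^{−1}Δ_{n+1}^{−1} − u v²(1−uv)·Γ̄₁⋯Γ̄_n·Δ̄_n^{−1}Δ̄_{n+1}^{−1} ] ), where the infinite sum is defined coefficientwise (the n-th summand is divisible by u^n, so each coefficient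 receives only finitely many contributions). -/
/-- Number of ascents in an integer sequence. -/
def ascList (l : List ℕ) : ℕ :=
  (List.range (l.length - 1)).countP (fun j => decide (l.getD j 0 < l.getD (j + 1) 0))

/-- Ascent sequence predicate. -/
def IsAscentSeq (l : List ℕ) : Prop :=
  l.getD 0 0 = 0 ∧ ∀ i, 0 < i → i < l.length → l.getD i 0 ≤ 1 + ascList (l.take i)

/-- Number of equal adjacent pairs. -/
def adjpairs (l : List ℕ) : ℕ :=
  (List.range (l.length - 1)).countP (fun j => decide (l.getD j 0 = l.getD (j + 1) 0))

/-- All runs of equal consecutive letters have length at most `k`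
(no `k+1` consecutive equal entries). -/
def RunsAtMost (k : ℕ) (l : List ℕ) : Prop :=
  ¬ ∃ i, i + k < l.length ∧ ∀ j ≤ k, l.getD (i + j) 0 = l.getD i 0

/-- Order-isomorphism of two partial orders on `Fin n`. -/
def PosetIso {n : ℕ} (P Q : PartialOrder (Fin n)) : Prop :=
  ∃ e : Fin n ≃ Fin n, ∀ a b, P.le a b ↔ Q.le (e a) (e b)

/-- The setoid of partial orders on `Fin n` satisfying `Φ`, up to isomorphism. -/
def posetSetoid (n : ℕ) (Φ : PartialOrder (Fin n) → Prop) :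
    Setoid {P : PartialOrder (Fin n) // Φ P} where
  r P Q := PosetIso P.1 Q.1
  iseqv := by
    constructor
    · intro P
      exact ⟨Equiv.refl _, fun a b => Iff.rfl⟩
    · rintro P Q ⟨e, he⟩
      refine ⟨e.symm, fun a b => ?_⟩
      simp only [he (e.symm a) (e.symm b), Equiv.apply_symm_apply]
    · rintro P Q R ⟨e, he⟩ ⟨f, hf⟩
      exact ⟨e.trans f, fun a b => (he a b).trans (hf (e a) (e b))⟩

/-- The number of isomorphism classes of partial orders on `n` elements satisfying `Φ`. -/
noncomputable def posetCount (n : ℕ) (Φ : PartialOrder (Fin n) → Prop) : ℕ :=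
  Nat.card (Quotient (posetSetoid n Φ))

/-- A poset is (2+2)-free. -/
def TwoTwoFree {n : ℕ} (P : PartialOrder (Fin n)) : Prop :=
  ¬ ∃ a b c d : Fin n, P.lt a b ∧ P.lt c d ∧
    ¬ P.le a c ∧ ¬ P.le c a ∧ ¬ P.le a d ∧ ¬ P.le d a ∧
    ¬ P.le b c ∧ ¬ P.le c b ∧ ¬ P.le b d ∧ ¬ P.le d b

/-- Two elements are indistinguishable: same strict down-set and same strict up-set. -/
def Indist {n : ℕ} (P : PartialOrder (Fin n)) (x y : Fin n) : Prop :=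
  (∀ z, P.lt z x ↔ P.lt z y) ∧ (∀ z, P.lt x z ↔ P.lt y z)

/-- Indistinguishability as a setoid. -/
def indistSetoid {n : ℕ} (P : PartialOrder (Fin n)) : Setoid (Fin n) where
  r := Indist P
  iseqv := ⟨fun _ => ⟨fun _ => Iff.rfl, fun _ => Iff.rfl⟩,
    fun h => ⟨fun z => (h.1 z).symm, fun z => (h.2 z).symm⟩,
    fun h h' => ⟨fun z => (h.1 z).trans (h'.1 z), fun z => (h.2 z).trans (h'.2 z)⟩⟩

/-- Size of the indistinguishability class of `x`. -/
noncomputable def classSize {n : ℕ} (P : PartialOrder (Fin n)) (x : Fin n) : ℕ :=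
  Nat.card {y : Fin n // Indist P x y}

/-- `maxindist(P) ≤ k`: each indistinguishability class has size at most `k`. -/
def MaxindistLe {n : ℕ} (P : PartialOrder (Fin n)) (k : ℕ) : Prop :=
  ∀ x : Fin n, classSize P x ≤ k

/-- No two distinct elements are indistinguishable. -/
def PrimitivePoset {n : ℕ} (P : PartialOrder (Fin n)) : Prop :=
  ∀ x y : Fin n, Indist P x y → x = y

/-- `rep(P)`: the minimum number of elements whose removal leaves an induced
subposet with no pair of distinct indistinguishable elements. -/
noncomputable def repStat {n : ℕ} (P : PartialOrder (Fin n)) : ℕ :=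
  sInf {m | ∃ S : Finset (Fin n), S.card = m ∧
    ∀ x ∉ S, ∀ y ∉ S, Indist P x y → x = y}

/-- The strict down-set of `x`. -/
def downSet {n : ℕ} (P : PartialOrder (Fin n)) (x : Fin n) : Set (Fin n) :=
  {z | P.lt z x}

/-- The level of `x`: the number of strict down-sets strictly contained in `D(x)`. -/
noncomputable def levelOf {n : ℕ} (P : PartialOrder (Fin n)) (x : Fin n) : ℕ :=
  {S : Set (Fin n) | (∃ z, S = downSet P z) ∧ S ⊂ downSet P x}.ncard

/-- `levels(P)`: index of the highest level. -/
noncomputable def levelsStat {n : ℕ} (P : PartialOrder (Fin n)) : ℕ :=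
  {S : Set (Fin n) | ∃ z, S = downSet P z}.ncard - 1

/-- `x` is a maximal element. -/
def IsMaximal {n : ℕ} (P : PartialOrder (Fin n)) (x : Fin n) : Prop :=
  ∀ z, ¬ P.lt x z

/-- `minmax(P)`: the minimum level of a maximal element. -/
noncomputable def minmaxStat {n : ℕ} (P : PartialOrder (Fin n)) : ℕ :=
  sInf {j | ∃ x, IsMaximal P x ∧ levelOf P x = j}

/-- Membership in `M_n`: upper triangular, no zero row or column, entries sum to `n`. -/
def InMatM (n : ℕ) (A : Σ d : ℕ, Matrix (Fin d) (Fin d) ℕ) : Prop :=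
  (∀ i j : Fin A.1, (j : ℕ) < (i : ℕ) → A.2 i j = 0) ∧
  (∀ i : Fin A.1, ∃ j, A.2 i j ≠ 0) ∧
  (∀ j : Fin A.1, ∃ i, A.2 i j ≠ 0) ∧
  (∑ i, ∑ j, A.2 i j) = n

/-- All entries are at most `k`. -/
def EntriesLe (k : ℕ) (A : Σ d : ℕ, Matrix (Fin d) (Fin d) ℕ) : Prop :=
  ∀ i j, A.2 i j ≤ k

/-- `index(A) - 1`: the least (0-based) row index with a nonzero entry in the last column. -/
noncomputable def matIndex0 (A : Σ d : ℕ, Matrix (Fin d) (Fin d) ℕ) : ℕ :=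
  sInf {i : ℕ | ∃ (h : i < A.1) (h' : A.1 - 1 < A.1), A.2 ⟨i, h⟩ ⟨A.1 - 1, h'⟩ ≠ 0}

/-- The number of nonzero entries of `A`. -/
noncomputable def matNZ (A : Σ d : ℕ, Matrix (Fin d) (Fin d) ℕ) : ℕ :=
  Nat.card {p : Fin A.1 × Fin A.1 // A.2 p.1 p.2 ≠ 0}

/-- Membership in `R_n`. -/
def InRset {n : ℕ} (π : Equiv.Perm (Fin n)) : Prop :=
  ¬ ∃ i j k : Fin n, (j : ℕ) = (i : ℕ) + 1 ∧ (i : ℕ) + 1 < (k : ℕ) ∧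
    (π k : ℕ) < (π i : ℕ) ∧ (π i : ℕ) < (π j : ℕ) ∧ (π i : ℕ) = (π k : ℕ) + 1

/-- No `k+1` consecutive letters, each one less than the previous. -/
def NoDescRun {n : ℕ} (k : ℕ) (π : Equiv.Perm (Fin n)) : Prop :=
  ¬ ∃ (i : ℕ) (h : i + k < n), ∀ j, ∀ hj : j ≤ k,
    (π ⟨i + j, by omega⟩ : ℕ) = (π ⟨i, by omega⟩ : ℕ) - j

/-- The number of descents by one: indices `i` with `π_i = π_{i+1} + 1`. -/
noncomputable def adjdes {n : ℕ} (π : Equiv.Perm (Fin n)) : ℕ :=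
  Nat.card {i : ℕ // ∃ h : i + 1 < n,
    (π ⟨i, Nat.lt_of_succ_lt h⟩ : ℕ) = (π ⟨i + 1, h⟩ : ℕ) + 1}

/-- A perfect matching, encoded as a fixed-point-free involution. -/
def IsMatching {m : ℕ} (f : Equiv.Perm (Fin m)) : Prop :=
  (∀ x, f (f x) = x) ∧ ∀ x, f x ≠ x

/-- The Stoimenow condition on a matching. -/
def IsStoimenow {m : ℕ} (f : Equiv.Perm (Fin m)) : Prop :=
  ¬ ∃ a c : Fin m, a < f a ∧ c < f c ∧
    (((a : ℕ) = (c : ℕ) + 1 ∧ f a < f c) ∨ ((a : ℕ) < (c : ℕ) ∧ (f a : ℕ) = (f c : ℕ) + 1))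

/-- There are `i, j` such that `{i+l, j+l}` is an arc for every `l = 0, …, k`. -/
def HasSimRun {m : ℕ} (k : ℕ) (f : Equiv.Perm (Fin m)) : Prop :=
  ∃ i j : ℕ, ∀ l ≤ k, ∃ (h1 : i + l < m) (h2 : j + l < m), f ⟨i + l, h1⟩ = ⟨j + l, h2⟩

/-- After removing the arcs with endpoints in `A`, no pair of similar arcs remains. -/
def SimilarFree {m : ℕ} (f : Equiv.Perm (Fin m)) (A : Finset (Fin m)) : Prop :=
  ¬ ∃ (i j : ℕ) (h1 : i < m) (h2 : j < m) (h3 : i + 1 < m) (h4 : j + 1 < m),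
    f ⟨i, h1⟩ = ⟨j, h2⟩ ∧ f ⟨i + 1, h3⟩ = ⟨j + 1, h4⟩ ∧
    (⟨i, h1⟩ : Fin m) ∉ A ∧ (⟨i + 1, h3⟩ : Fin m) ∉ A ∧
    (⟨j, h2⟩ : Fin m) ∉ A ∧ (⟨j + 1, h4⟩ : Fin m) ∉ A

/-- `echords(M)`: minimum number of arcs whose removal leaves no similar pair. -/
noncomputable def echords {m : ℕ} (f : Equiv.Perm (Fin m)) : ℕ :=
  sInf {c | ∃ A : Finset (Fin m), (∀ x ∈ A, f x ∈ A) ∧ A.card = 2 * c ∧ SimilarFree f A}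


namespace AscAux

lemma getD_concat_self (l : List ℕ) (j : ℕ) : (l ++ [j]).getD l.length 0 = j := by
  rw [List.getD_append_right _ _ _ _ le_rfl]; simp

lemma getD_concat_lt (l : List ℕ) (j i : ℕ) (h : i < l.length) :
    (l ++ [j]).getD i 0 = l.getD i 0 := List.getD_append _ _ _ _ h

lemma getLastD_eq_getD (l : List ℕ) (h : l ≠ []) : l.getLastD 0 = l.getD (l.length - 1) 0 := by
  rcases l.eq_nil_or_concat with rfl | ⟨l', a, rfl⟩
  · exact absurd rfl h
  · simp only [List.concat_eq_append]
    rw [List.getLastD_concat]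
    simp only [List.length_append, List.length_singleton, Nat.add_sub_cancel]
    rw [getD_concat_self]

lemma countP_range_succ (p : ℕ → Bool) (n : ℕ) :
    (List.range (n + 1)).countP p = (List.range n).countP p + (if p n then 1 else 0) := by
  rw [List.range_succ, List.countP_append]
  simp [List.countP_cons]

lemma countP_range_mono (p : ℕ → Bool) {m n : ℕ} (h : m ≤ n) :
    (List.range m).countP p ≤ (List.range n).countP p := by
  induction n with
  | zero => simp_all
  | succ n ih =>
    rcases Nat.lt_or_ge m (n + 1) with h' | h'
    · exact (ih (by omega)).trans (by rw [countP_range_succ]; omega)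
    · have : m = n + 1 := by omega
      subst this; exact le_rfl

lemma getD_take (l : List ℕ) {i a : ℕ} (h : a < i) : (l.take i).getD a 0 = l.getD a 0 := by
  rw [List.getD_eq_getElem?_getD, List.getD_eq_getElem?_getD, List.getElem?_take_of_lt h]

lemma ascList_take_le (l : List ℕ) (i : ℕ) : ascList (l.take i) ≤ ascList l := by
  unfold ascList
  rcases Nat.eq_zero_or_pos i with rfl | hi
  · simp
  have h1 : (l.take i).length - 1 ≤ l.length - 1 := by simp; omega
  calc (List.range ((l.take i).length - 1)).countP
        (fun j => decide ((l.take i).getD j 0 < (l.take i).getD (j + 1) 0))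
      = (List.range ((l.take i).length - 1)).countP
        (fun j => decide (l.getD j 0 < l.getD (j + 1) 0)) := by
        apply List.countP_congr
        intro a ha
        simp only [List.mem_range] at ha
        have hlen : (l.take i).length = min i l.length := List.length_take
        have ha1 : a + 1 < i := by omega
        rw [getD_take l (by omega), getD_take l ha1]
    _ ≤ _ := countP_range_mono _ h1

lemma ascList_le (l : List ℕ) : ascList l ≤ l.length - 1 :=
  List.countP_le_length.trans (by simp)

lemma ascList_concat (l : List ℕ) (hl : l ≠ []) (j : ℕ) :
    ascList (l ++ [j]) = ascList l + (if l.getLastD 0 < j then 1 else 0) := by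
  obtain ⟨k, hk⟩ : ∃ k, l.length = k + 1 :=
    ⟨l.length - 1, (Nat.succ_pred_eq_of_pos (List.length_pos_iff.mpr hl)).symm⟩
  unfold ascList
  have hlen : (l ++ [j]).length = k + 2 := by simp [hk]
  rw [hlen, hk, show k + 2 - 1 = k + 1 from rfl, show k + 1 - 1 = k from rfl, countP_range_succ]
  congr 1
  · apply List.countP_congr
    intro a ha
    simp only [List.mem_range] at ha
    rw [getD_concat_lt l j a (by omega), getD_concat_lt l j (a+1) (by omega)]
  · rw [getD_concat_lt l j k (by omega), show k + 1 = l.length by omega, getD_concat_self,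
      getLastD_eq_getD l hl, hk]
    simp

lemma adjpairs_concat (l : List ℕ) (hl : l ≠ []) (j : ℕ) :
    adjpairs (l ++ [j]) = adjpairs l + (if j = l.getLastD 0 then 1 else 0) := by
  obtain ⟨k, hk⟩ : ∃ k, l.length = k + 1 :=
    ⟨l.length - 1, (Nat.succ_pred_eq_of_pos (List.length_pos_iff.mpr hl)).symm⟩
  unfold adjpairs
  have hlen : (l ++ [j]).length = k + 2 := by simp [hk]
  rw [hlen, hk, show k + 2 - 1 = k + 1 from rfl, show k + 1 - 1 = k from rfl, countP_range_succ]
  congr 1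
  · apply List.countP_congr
    intro a ha
    simp only [List.mem_range] at ha
    rw [getD_concat_lt l j a (by omega), getD_concat_lt l j (a+1) (by omega)]
  · rw [getD_concat_lt l j k (by omega), show k + 1 = l.length by omega, getD_concat_self,
      getLastD_eq_getD l hl, hk]
    simp only [Nat.add_sub_cancel]
    by_cases h : l.getD k 0 = j <;> simp [h, eq_comm]

lemma isAscentSeq_concat (l : List ℕ) (hl : l ≠ []) (j : ℕ) :
    IsAscentSeq (l ++ [j]) ↔ IsAscentSeq l ∧ j ≤ 1 + ascList l := by
  have hpos : 0 < l.length := List.length_pos_iff.mpr hl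
  constructor
  · rintro ⟨h0, h⟩
    refine ⟨⟨by rwa [getD_concat_lt l j 0 hpos] at h0, fun i hi hil => ?_⟩, ?_⟩
    · have := h i hi (by simp; omega)
      rwa [getD_concat_lt l j i hil, List.take_append_of_le_length (by omega)] at this
    · have := h l.length hpos (by simp)
      rwa [getD_concat_self, List.take_left] at this
  · rintro ⟨⟨h0, h⟩, hj⟩
    refine ⟨by rwa [getD_concat_lt l j 0 hpos], fun i hi hil => ?_⟩
    simp only [List.length_append, List.length_singleton] at hil
    rcases Nat.lt_or_ge i l.length with h' | h'
    · rw [getD_concat_lt l j i h', List.take_append_of_le_length (by omega)]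
      exact h i hi h'
    · have : i = l.length := by omega
      subst this
      rwa [getD_concat_self, List.take_left]

lemma entry_le (l : List ℕ) (h : IsAscentSeq l) (i : ℕ) (hi : i < l.length) : l.getD i 0 ≤ i := by
  rcases Nat.eq_zero_or_pos i with rfl | hpos
  · exact le_of_eq h.1
  · have := h.2 i hpos hi
    have h2 : ascList (l.take i) ≤ (l.take i).length - 1 := ascList_le _
    have h3 : (l.take i).length = i := by simp; omega
    omega

lemma last_le (l : List ℕ) (h : IsAscentSeq l) (hl : l ≠ []) :
    l.getLastD 0 ≤ ascList l + 1 := by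
  rw [getLastD_eq_getD l hl]
  obtain ⟨k, hk⟩ : ∃ k, l.length = k + 1 :=
    ⟨l.length - 1, (Nat.succ_pred_eq_of_pos (List.length_pos_iff.mpr hl)).symm⟩
  rw [hk]
  simp only [Nat.add_sub_cancel]
  rcases Nat.eq_zero_or_pos k with rfl | hkpos
  · rw [h.1]; omega
  · have := h.2 k hkpos (by omega)
    have := ascList_take_le l k
    omega

lemma concat_eq (l : List ℕ) (hl : l ≠ []) : l.dropLast ++ [l.getLastD 0] = l := by
  rcases l.eq_nil_or_concat with rfl | ⟨l', a, rfl⟩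
  · exact absurd rfl hl
  · simp only [List.concat_eq_append]
    rw [List.getLastD_concat, List.dropLast_concat]

end AscAux

namespace AscAux

instance : DecidablePred IsAscentSeq := fun l =>
  decidable_of_iff (l.getD 0 0 = 0 ∧ ∀ i < l.length, 0 < i → l.getD i 0 ≤ 1 + ascList (l.take i))
    (by unfold IsAscentSeq; tauto)

/-- The finset of ascent sequences of length `n`. -/
noncomputable def ascFinset (n : ℕ) : Finset (List ℕ) :=
  ((Finset.univ : Finset (Fin n → Fin (n + 1))).image
    (fun f => (List.ofFn f).map Fin.val)).filter IsAscentSeq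

lemma mem_ascFinset {n : ℕ} {l : List ℕ} :
    l ∈ ascFinset n ↔ l.length = n ∧ IsAscentSeq l := by
  unfold ascFinset
  rw [Finset.mem_filter, Finset.mem_image]
  constructor
  · rintro ⟨⟨f, -, rfl⟩, h2⟩
    exact ⟨by simp, h2⟩
  · rintro ⟨h1, h2⟩
    refine ⟨⟨fun i => ⟨l.getD i 0, ?_⟩, Finset.mem_univ _, ?_⟩, h2⟩
    · have := entry_le l h2 i (by omega)
      omega
    · apply List.ext_getElem (by simp [h1])
      intro i hi1 hi2
      simp only [List.getElem_map, List.getElem_ofFn]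
      rw [List.getD_eq_getElem l 0 hi2]

lemma isAscentSeq_single : IsAscentSeq [0] := by
  refine ⟨rfl, fun i hi hil => ?_⟩
  simp at hil
  omega

lemma ascFinset_one : ascFinset 1 = {[0]} := by
  ext l
  rw [mem_ascFinset, Finset.mem_singleton]
  constructor
  · rintro ⟨h1, h2, -⟩
    match l, h1 with
    | [x], _ => rw [show x = 0 from h2]
  · rintro rfl
    exact ⟨rfl, isAscentSeq_single⟩

lemma ascList_single (x : ℕ) : ascList [x] = 0 := rfl
lemma adjpairs_single (x : ℕ) : adjpairs [x] = 0 := rfl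

lemma sum_ascFinset_succ {M : Type*} [AddCommMonoid M] (n : ℕ) (hn : 1 ≤ n) (f : List ℕ → M) :
    ∑ r ∈ ascFinset (n + 1), f r
      = ∑ s ∈ ascFinset n, ∑ j ∈ Finset.range (ascList s + 2), f (s ++ [j]) := by
  have step2 : ∑ p ∈ (ascFinset n).sigma (fun s => Finset.range (ascList s + 2)),
      f (p.1 ++ [p.2]) = ∑ s ∈ ascFinset n, ∑ j ∈ Finset.range (ascList s + 2), f (s ++ [j]) :=
    Finset.sum_sigma _ _ _
  rw [← step2]
  refine Finset.sum_nbij' (i := fun r => (⟨r.dropLast, r.getLastD 0⟩ :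
      (_ : List ℕ) × ℕ)) (j := fun p => p.1 ++ [p.2]) ?_ ?_ ?_ ?_ ?_
  · intro r hr
    rw [mem_ascFinset] at hr
    obtain ⟨h1, h2⟩ := hr
    have hne : r.dropLast ≠ [] := by
      have : r.dropLast.length = n := by simp [h1]
      intro h; rw [h] at this; simp at this; omega
    have hco := concat_eq r (by intro h; rw [h] at h1; simp at h1)
    rw [← hco, isAscentSeq_concat _ hne] at h2
    rw [Finset.mem_sigma, mem_ascFinset, Finset.mem_range]
    dsimp only
    refine ⟨⟨by simp [h1], h2.1⟩, by omega⟩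
  · intro p hp
    rw [Finset.mem_sigma, mem_ascFinset, Finset.mem_range] at hp
    obtain ⟨⟨h1, h2⟩, h3⟩ := hp
    rw [mem_ascFinset]
    have hne : p.1 ≠ [] := by intro h; rw [h] at h1; simp at h1; omega
    constructor
    · simp [h1]
    · rw [isAscentSeq_concat _ hne]
      exact ⟨h2, by omega⟩
  · intro r hr
    rw [mem_ascFinset] at hr
    dsimp only
    exact concat_eq r (by intro h; rw [h] at hr; simp at hr)
  · rintro ⟨s1, j1⟩ hp
    simp only [List.dropLast_concat, List.getLastD_concat]
  · intro r hr
    rw [mem_ascFinset] at hr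
    dsimp only
    rw [concat_eq r (by intro h; rw [h] at hr; simp at hr)]

end AscAux


namespace Stmt10

/-- `u`, `v`, `y`, `t` in `S = ℚ⟦u,v,y,t⟧`. -/
noncomputable def u : MvPowerSeries (Fin 4) ℚ := MvPowerSeries.X 0
noncomputable def v : MvPowerSeries (Fin 4) ℚ := MvPowerSeries.X 1
noncomputable def y : MvPowerSeries (Fin 4) ℚ := MvPowerSeries.X 2
noncomputable def t : MvPowerSeries (Fin 4) ℚ := MvPowerSeries.X 3

/-- `G`: the coefficient of `u^a v^ℓ y^b t^n` is the number of ascent sequences of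
length `n` with `a` ascents, last letter `ℓ` (the empty sequence having last letter `0`,
so the coefficient of `t^0` is `1`) and `b` equal pairs. -/
noncomputable def G : MvPowerSeries (Fin 4) ℚ := fun m =>
  (Nat.card {l : List ℕ // l.length = m 3 ∧ IsAscentSeq l ∧
    ascList l = m 0 ∧ l.getLastD 0 = m 1 ∧ adjpairs l = m 2} : ℚ)

noncomputable def Δ (k : ℕ) : MvPowerSeries (Fin 4) ℚ :=
  (1 - t * y) ^ k * (1 - u) + u * (1 + t - t * y) ^ k

noncomputable def Δb (k : ℕ) : MvPowerSeries (Fin 4) ℚ :=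
  (1 - t * y) ^ k * (1 - u * v) + u * v * (1 + t - t * y) ^ k

noncomputable def Γ (k : ℕ) : MvPowerSeries (Fin 4) ℚ :=
  u * (1 + t - t * y) ^ k * (Δ k)⁻¹

noncomputable def Γb (k : ℕ) : MvPowerSeries (Fin 4) ℚ :=
  u * v * (1 + t - t * y) ^ k * (Δb k)⁻¹

noncomputable def D : MvPowerSeries (Fin 4) ℚ :=
  v - 1 - t - t * y * v + t * y + t * u * v

open AscAux

local notation "S" => MvPowerSeries (Fin 4) ℚ

/-- weight of an ascent sequence -/
noncomputable def Wgt (w z : S) (s : List ℕ) : S :=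
  w ^ ascList s * z ^ (s.getLastD 0) * y ^ adjpairs s

/-- the generating series of ascent sequences of length `n`. -/
noncomputable def FFn (w z : S) (n : ℕ) : S := t ^ n * ∑ s ∈ ascFinset n, Wgt w z s

/-- partial sums over lengths `1,…,M`. -/
noncomputable def FFN (w z : S) (M : ℕ) : S := ∑ n ∈ Finset.range M, FFn w z (n + 1)

lemma FFn_one (w z : S) : FFn w z 1 = t := by
  unfold FFn
  rw [ascFinset_one, Finset.sum_singleton]
  unfold Wgt
  norm_num [ascList_single, adjpairs_single]

lemma key_alg (w z Y : S) (a ℓ b : ℕ) (hℓ : ℓ ≤ a + 1) :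
    (z - 1) * (∑ j ∈ Finset.range (a + 2),
        w ^ (a + if ℓ < j then 1 else 0) * z ^ j * Y ^ (b + if j = ℓ then 1 else 0))
      = (w ^ a * z ^ ℓ * Y ^ b - w ^ a * 1 ^ ℓ * Y ^ b)
        + Y * (z - 1) * (w ^ a * z ^ ℓ * Y ^ b)
        + w * z ^ 2 * ((w * z) ^ a * 1 ^ ℓ * Y ^ b)
        - w * z * (w ^ a * z ^ ℓ * Y ^ b) := by
  have hsplit : Finset.range (a + 2) = Finset.range ℓ ∪ Finset.Ico ℓ (a + 2) := by
    rw [Finset.range_eq_Ico, Finset.range_eq_Ico, Finset.Ico_union_Ico_eq_Ico (by omega) (by omega),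
      ← Finset.range_eq_Ico]
  rw [hsplit, Finset.sum_union (by
    rw [Finset.range_eq_Ico]
    exact Finset.Ico_disjoint_Ico_consecutive 0 ℓ (a + 2))]
  rw [Finset.sum_eq_sum_Ico_succ_bot (by omega)]
  have e1 : ∀ j ∈ Finset.range ℓ,
      w ^ (a + if ℓ < j then 1 else 0) * z ^ j * Y ^ (b + if j = ℓ then 1 else 0)
        = w ^ a * Y ^ b * z ^ j := by
    intro j hj
    rw [Finset.mem_range] at hj
    rw [if_neg (by omega), if_neg (by omega)]
    ring
  have e2 : (w ^ (a + if ℓ < ℓ then 1 else 0) * z ^ ℓ * Y ^ (b + if ℓ = ℓ then 1 else 0))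
      = Y * (w ^ a * z ^ ℓ * Y ^ b) := by
    rw [if_neg (by omega), if_pos rfl]
    ring
  have e3 : ∀ j ∈ Finset.Ico (ℓ + 1) (a + 2),
      w ^ (a + if ℓ < j then 1 else 0) * z ^ j * Y ^ (b + if j = ℓ then 1 else 0)
        = w ^ (a + 1) * Y ^ b * z ^ j := by
    intro j hj
    rw [Finset.mem_Ico] at hj
    rw [if_pos (by omega), if_neg (by omega)]
    ring
  rw [Finset.sum_congr rfl e1, Finset.sum_congr rfl e3, e2]
  rw [← Finset.mul_sum, ← Finset.mul_sum]
  rw [Finset.sum_Ico_eq_sub _ (by omega : ℓ + 1 ≤ a + 2)]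
  have g1 : (z - 1) * ∑ j ∈ Finset.range ℓ, z ^ j = z ^ ℓ - 1 := by
    rw [mul_comm]; exact geom_sum_mul z ℓ
  have g2 : (z - 1) * ∑ j ∈ Finset.range (a + 2), z ^ j = z ^ (a + 2) - 1 := by
    rw [mul_comm]; exact geom_sum_mul z (a + 2)
  have g3 : (z - 1) * ∑ j ∈ Finset.range (ℓ + 1), z ^ j = z ^ (ℓ + 1) - 1 := by
    rw [mul_comm]; exact geom_sum_mul z (ℓ + 1)
  have expand : (z - 1) * (w ^ a * Y ^ b * ∑ j ∈ Finset.range ℓ, z ^ j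
      + (Y * (w ^ a * z ^ ℓ * Y ^ b)
        + w ^ (a + 1) * Y ^ b * ((∑ j ∈ Finset.range (a + 2), z ^ j)
            - ∑ j ∈ Finset.range (ℓ + 1), z ^ j)))
      = w ^ a * Y ^ b * ((z - 1) * ∑ j ∈ Finset.range ℓ, z ^ j)
        + Y * (z - 1) * (w ^ a * z ^ ℓ * Y ^ b)
        + w ^ (a + 1) * Y ^ b * ((z - 1) * ∑ j ∈ Finset.range (a + 2), z ^ j)
        - w ^ (a + 1) * Y ^ b * ((z - 1) * ∑ j ∈ Finset.range (ℓ + 1), z ^ j) := by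
    ring
  rw [expand, g1, g2, g3]
  ring

lemma key_wgt (w z : S) (s : List ℕ) (hs : s ≠ []) (hlast : s.getLastD 0 ≤ ascList s + 1) :
    (z - 1) * (∑ j ∈ Finset.range (ascList s + 2), Wgt w z (s ++ [j]))
      = (Wgt w z s - Wgt w 1 s) + y * (z - 1) * Wgt w z s
        + w * z ^ 2 * Wgt (w * z) 1 s - w * z * Wgt w z s := by
  have h1 : ∀ j, Wgt w z (s ++ [j])
      = w ^ (ascList s + if s.getLastD 0 < j then 1 else 0) * z ^ j
        * y ^ (adjpairs s + if j = s.getLastD 0 then 1 else 0) := by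
    intro j
    unfold Wgt
    rw [ascList_concat s hs j, List.getLastD_concat, adjpairs_concat s hs j]
  simp only [h1]
  unfold Wgt
  exact key_alg w z y (ascList s) (s.getLastD 0) (adjpairs s) hlast

lemma level_rec (w z : S) (n : ℕ) (hn : 1 ≤ n) :
    (z - 1) * FFn w z (n + 1)
      = t * ((FFn w z n - FFn w 1 n) + y * (z - 1) * FFn w z n
          + w * z ^ 2 * FFn (w * z) 1 n - w * z * FFn w z n) := by
  unfold FFn
  rw [sum_ascFinset_succ n hn (Wgt w z)]
  have h2 : ∀ s ∈ ascFinset n,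
      (z - 1) * ∑ j ∈ Finset.range (ascList s + 2), Wgt w z (s ++ [j])
        = (Wgt w z s - Wgt w 1 s) + y * (z - 1) * Wgt w z s
          + w * z ^ 2 * Wgt (w * z) 1 s - w * z * Wgt w z s := by
    intro s hsmem
    rw [mem_ascFinset] at hsmem
    have hs : s ≠ [] := by
      intro h; rw [h] at hsmem; simp at hsmem; omega
    exact key_wgt w z s hs (last_le s hsmem.2 hs)
  calc (z - 1) * (t ^ (n + 1) * ∑ s ∈ ascFinset n,
          ∑ j ∈ Finset.range (ascList s + 2), Wgt w z (s ++ [j]))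
      = t ^ (n + 1) * ∑ s ∈ ascFinset n,
          (z - 1) * ∑ j ∈ Finset.range (ascList s + 2), Wgt w z (s ++ [j]) := by
        simp only [Finset.mul_sum]
        exact Finset.sum_congr rfl fun s _ => Finset.sum_congr rfl fun j _ => by ring
    _ = t ^ (n + 1) * ∑ s ∈ ascFinset n,
          ((Wgt w z s - Wgt w 1 s) + y * (z - 1) * Wgt w z s
            + w * z ^ 2 * Wgt (w * z) 1 s - w * z * Wgt w z s) := by
        rw [Finset.sum_congr rfl h2]
    _ = _ := by
        rw [Finset.sum_sub_distrib, Finset.sum_add_distrib, Finset.sum_add_distrib,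
          Finset.sum_sub_distrib, ← Finset.mul_sum, ← Finset.mul_sum, ← Finset.mul_sum]
        ring


noncomputable def Ap : S := 1 - t * y
noncomputable def Bp : S := 1 + t - t * y

noncomputable def Δp (p : S) (k : ℕ) : S := Ap ^ k * (1 - p) + p * Bp ^ k
noncomputable def Γp (p : S) (k : ℕ) : S := p * Bp ^ k * (Δp p k)⁻¹
noncomputable def Vp (p : S) (k : ℕ) : S := Bp * Δp p k * (Δp p (k + 1))⁻¹
noncomputable def En (p : S) (k : ℕ) : S := Ap ^ k * (1 - p) * (Δp p (k + 1))⁻¹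
noncomputable def Pp (p : S) (n : ℕ) : S := ∏ k ∈ Finset.range n, (Γp p k * Vp p k ^ 2)

lemma constCoeff_Δp (p : S) (hp : MvPowerSeries.constantCoeff p = 0) (k : ℕ) :
    MvPowerSeries.constantCoeff (Δp p k) = 1 := by
  unfold Δp Ap Bp t y
  simp [hp]

lemma Δp_ne_zero (p : S) (hp : MvPowerSeries.constantCoeff p = 0) (k : ℕ) :
    Δp p k ≠ 0 := by
  intro h
  have := constCoeff_Δp p hp k
  rw [h] at this
  simp at this

lemma Δp_mul_inv (p : S) (hp : MvPowerSeries.constantCoeff p = 0) (k : ℕ) :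
    Δp p k * (Δp p k)⁻¹ = 1 :=
  MvPowerSeries.mul_inv_cancel _ (by rw [constCoeff_Δp p hp k]; norm_num)

lemma Δp_inv_mul (p : S) (hp : MvPowerSeries.constantCoeff p = 0) (k : ℕ) :
    (Δp p k)⁻¹ * Δp p k = 1 := by
  rw [mul_comm]; exact Δp_mul_inv p hp k

lemma Δp_zero (p : S) : Δp p 0 = 1 := by unfold Δp; ring

lemma Γp_zero (p : S) : Γp p 0 = p := by
  unfold Γp
  rw [Δp_zero, inv_one]
  ring

lemma Δp_succ (p : S) (k : ℕ) : Δp p (k + 1) = Ap * Δp p k + t * p * Bp ^ k := by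
  unfold Δp Ap Bp; ring

lemma Bp_mul_Δp (p : S) (k : ℕ) :
    Bp * Δp p k - Δp p (k + 1) = t * Ap ^ k * (1 - p) := by
  unfold Δp Ap Bp; ring

lemma Vp_sub_one (p : S) (hp : MvPowerSeries.constantCoeff p = 0) (k : ℕ) :
    Vp p k - 1 = t * En p k := by
  have e2 := Δp_mul_inv p hp (k + 1)
  calc Vp p k - 1
      = Bp * Δp p k * (Δp p (k+1))⁻¹ - Δp p (k+1) * (Δp p (k+1))⁻¹ := by
        rw [e2]; unfold Vp; ring
    _ = (Bp * Δp p k - Δp p (k+1)) * (Δp p (k+1))⁻¹ := by ring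
    _ = t * En p k := by rw [Bp_mul_Δp]; unfold En; ring

lemma Γp_mul_Vp (p : S) (hp : MvPowerSeries.constantCoeff p = 0) (k : ℕ) :
    Γp p k * Vp p k = Γp p (k + 1) := by
  have e1 := Δp_mul_inv p hp k
  calc Γp p k * Vp p k
      = p * Bp ^ (k+1) * (Δp p (k+1))⁻¹ * (Δp p k * (Δp p k)⁻¹) := by
        unfold Γp Vp; ring
    _ = Γp p (k+1) := by rw [e1]; unfold Γp; ring

lemma kernel_eq (p : S) (hp : MvPowerSeries.constantCoeff p = 0) (k : ℕ) :
    Vp p k - 1 - t - t * y * Vp p k + t * y + t * Γp p k * Vp p k = 0 := by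
  have e1 := Δp_inv_mul p hp k
  have e2 := Δp_inv_mul p hp (k + 1)
  have h : (Vp p k - 1 - t - t * y * Vp p k + t * y + t * Γp p k * Vp p k) * Δp p (k + 1)
      = 0 := by
    calc (Vp p k - 1 - t - t * y * Vp p k + t * y + t * Γp p k * Vp p k) * Δp p (k + 1)
        = (Bp * Δp p k - t * y * (Bp * Δp p k)) * ((Δp p (k+1))⁻¹ * Δp p (k+1))
            + (- 1 - t + t * y) * Δp p (k+1)
            + t * (p * Bp ^ (k+1)) *
              (((Δp p k)⁻¹ * Δp p k) * ((Δp p (k+1))⁻¹ * Δp p (k+1))) := by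
          unfold Vp Γp; ring
      _ = Bp * Δp p k - t * y * (Bp * Δp p k) + (- 1 - t + t * y) * Δp p (k+1)
            + t * (p * Bp ^ (k+1)) := by rw [e1, e2]; ring
      _ = 0 := by unfold Δp Ap Bp; ring
  rcases mul_eq_zero.mp h with h' | h'
  · exact h'
  · exact absurd h' (Δp_ne_zero p hp (k+1))

lemma Pp_succ (p : S) (n : ℕ) : Pp p (n + 1) = Pp p n * (Γp p n * Vp p n ^ 2) :=
  Finset.prod_range_succ _ _

lemma Pp_eq (p : S) (hp : MvPowerSeries.constantCoeff p = 0) (n : ℕ) :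
    Pp p n = Bp ^ n * (∏ i ∈ Finset.Icc 1 n, Γp p i) * (Δp p n)⁻¹ := by
  induction n with
  | zero =>
    unfold Pp
    rw [Δp_zero, inv_one]
    simp
  | succ n ih =>
    rw [Pp_succ, ih, Finset.prod_Icc_succ_top (by omega)]
    have key : (Δp p n)⁻¹ * (Γp p n * Vp p n ^ 2)
        = Bp * Γp p (n+1) * (Δp p (n+1))⁻¹ := by
      have e1 := Δp_mul_inv p hp n
      calc (Δp p n)⁻¹ * (Γp p n * Vp p n ^ 2)
          = p * Bp ^ (n+2) * ((Δp p (n+1))⁻¹ * (Δp p (n+1))⁻¹)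
              * ((Δp p n * (Δp p n)⁻¹) * (Δp p n * (Δp p n)⁻¹)) := by
            unfold Γp Vp; ring
        _ = p * Bp ^ (n+2) * ((Δp p (n+1))⁻¹ * (Δp p (n+1))⁻¹) := by rw [e1]; ring
        _ = Bp * Γp p (n+1) * (Δp p (n+1))⁻¹ := by unfold Γp; ring
    calc Bp ^ n * (∏ i ∈ Finset.Icc 1 n, Γp p i) * (Δp p n)⁻¹ * (Γp p n * Vp p n ^ 2)
        = Bp ^ n * (∏ i ∈ Finset.Icc 1 n, Γp p i)
            * ((Δp p n)⁻¹ * (Γp p n * Vp p n ^ 2)) := by ring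
      _ = Bp ^ n * (∏ i ∈ Finset.Icc 1 n, Γp p i) * (Bp * Γp p (n+1) * (Δp p (n+1))⁻¹) := by
          rw [key]
      _ = Bp ^ (n+1) * ((∏ i ∈ Finset.Icc 1 n, Γp p i) * Γp p (n+1)) * (Δp p (n+1))⁻¹ := by
          ring


lemma t_ne_zero : (t : S) ≠ 0 := by
  intro h
  have h1 : MvPowerSeries.coeff (Finsupp.single (3 : Fin 4) 1) (t : S) = 1 := by
    unfold t
    rw [MvPowerSeries.coeff_X, if_pos rfl]
  rw [h] at h1
  simp at h1

lemma FFN_succ (w z : S) (M : ℕ) : FFN w z (M + 1) = FFN w z M + FFn w z (M + 1) :=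
  Finset.sum_range_succ _ _

lemma global_rec (w z : S) (M : ℕ) :
    (z - 1) * (FFN w z (M + 1) - t)
      = t * ((FFN w z M - FFN w 1 M) + y * (z - 1) * FFN w z M
          + w * z ^ 2 * FFN (w * z) 1 M - w * z * FFN w z M) := by
  unfold FFN
  rw [Finset.sum_range_succ' (fun n => FFn w z (n + 1)) M, FFn_one]
  calc (z - 1) * ((∑ n ∈ Finset.range M, FFn w z (n + 1 + 1)) + t - t)
      = ∑ n ∈ Finset.range M, (z - 1) * FFn w z (n + 1 + 1) := by
        rw [add_sub_cancel_right, Finset.mul_sum]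
    _ = ∑ n ∈ Finset.range M, t * ((FFn w z (n+1) - FFn w 1 (n+1))
          + y * (z - 1) * FFn w z (n+1)
          + w * z ^ 2 * FFn (w * z) 1 (n+1) - w * z * FFn w z (n+1)) := by
        exact Finset.sum_congr rfl fun n _ => level_rec w z (n + 1) (by omega)
    _ = _ := by
        rw [← Finset.mul_sum, Finset.sum_sub_distrib, Finset.sum_add_distrib,
          Finset.sum_add_distrib, Finset.sum_sub_distrib,
          ← Finset.mul_sum, ← Finset.mul_sum, ← Finset.mul_sum]

lemma key_step (p : S) (hp : MvPowerSeries.constantCoeff p = 0) (k M : ℕ) :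
    FFN (Γp p k) 1 M = t * En p k - En p k * FFn (Γp p k) (Vp p k) (M + 1)
      + Γp p k * Vp p k ^ 2 * FFN (Γp p (k + 1)) 1 M := by
  have hg := global_rec (Γp p k) (Vp p k) M
  have hk := kernel_eq p hp k
  have hv := Vp_sub_one p hp k
  have hs := FFN_succ (Γp p k) (Vp p k) M
  rw [← Γp_mul_Vp p hp k]
  apply mul_left_cancel₀ t_ne_zero
  linear_combination hg - (Vp p k - 1) * hs - FFN (Γp p k) (Vp p k) M * hk
    - (FFn (Γp p k) (Vp p k) (M + 1) - t) * hv

lemma telescope (p : S) (hp : MvPowerSeries.constantCoeff p = 0) (M N : ℕ) :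
    FFN p 1 M = (∑ n ∈ Finset.range N, Pp p n
        * (t * En p n - En p n * FFn (Γp p n) (Vp p n) (M + 1)))
      + Pp p N * FFN (Γp p N) 1 M := by
  induction N with
  | zero => simp [Pp, Γp_zero]
  | succ N ih =>
    rw [ih, Finset.sum_range_succ, Pp_succ, key_step p hp N M]
    ring

/-- coefficient-killing lemma -/
lemma coeff_X_pow_mul_eq_zero {m : Fin 4 →₀ ℕ} {i : Fin 4} {k : ℕ} (hm : m i < k) (Y : S) :
    MvPowerSeries.coeff m (MvPowerSeries.X i ^ k * Y) = 0 := by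
  rw [MvPowerSeries.X_pow_eq, MvPowerSeries.coeff_monomial_mul, if_neg]
  intro h
  have := h i
  simp [Finsupp.single_apply] at this
  omega


noncomputable def quad (a b c d : ℕ) : Fin 4 →₀ ℕ :=
  Finsupp.single 0 a + Finsupp.single 1 b + Finsupp.single 2 c + Finsupp.single 3 d

lemma quad_eq_iff (a b c d : ℕ) (m : Fin 4 →₀ ℕ) :
    m = quad a b c d ↔ m 0 = a ∧ m 1 = b ∧ m 2 = c ∧ m 3 = d := by
  constructor
  · rintro rfl
    refine ⟨?_, ?_, ?_, ?_⟩ <;> simp [quad, Finsupp.single_apply]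
  · rintro ⟨h0, h1, h2, h3⟩
    ext x
    fin_cases x <;> simp [quad, Finsupp.single_apply] <;> assumption

lemma monomial_tuvy (a ℓ b k : ℕ) :
    (t : S) ^ k * (u ^ a * v ^ ℓ * y ^ b)
      = MvPowerSeries.monomial (quad a ℓ b k) 1 := by
  unfold t u v y
  rw [MvPowerSeries.X_pow_eq, MvPowerSeries.X_pow_eq, MvPowerSeries.X_pow_eq,
    MvPowerSeries.X_pow_eq, MvPowerSeries.monomial_mul_monomial,
    MvPowerSeries.monomial_mul_monomial, MvPowerSeries.monomial_mul_monomial]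
  rw [one_mul, one_mul, one_mul]
  congr 1
  unfold quad
  abel

lemma coeff_FFn_uv (m : Fin 4 →₀ ℕ) (k : ℕ) :
    MvPowerSeries.coeff m (FFn u v k)
      = (((ascFinset k).filter (fun s => m 0 = ascList s ∧ m 1 = s.getLastD 0 ∧
          m 2 = adjpairs s ∧ m 3 = k)).card : ℚ) := by
  unfold FFn Wgt
  rw [Finset.mul_sum, map_sum]
  rw [Finset.sum_congr rfl (fun s _ => by
    rw [monomial_tuvy, MvPowerSeries.coeff_monomial])]
  rw [Finset.sum_congr rfl (fun s _ => if_congr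
    (quad_eq_iff (ascList s) (s.getLastD 0) (adjpairs s) k m) rfl rfl)]
  rw [Finset.sum_boole]

lemma isAscentSeq_nil : IsAscentSeq [] := ⟨rfl, fun i hi hil => by simp at hil⟩

lemma ascFinset_zero : ascFinset 0 = {[]} := by
  ext l
  rw [mem_ascFinset, Finset.mem_singleton]
  constructor
  · rintro ⟨h1, -⟩
    exact List.length_eq_zero_iff.mp h1
  · rintro rfl
    exact ⟨rfl, isAscentSeq_nil⟩

lemma coeff_G_eq (m : Fin 4 →₀ ℕ) :
    MvPowerSeries.coeff m G = (((ascFinset (m 3)).filter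
      (fun s => m 0 = ascList s ∧ m 1 = s.getLastD 0 ∧ m 2 = adjpairs s)).card : ℚ) := by
  have h0 : MvPowerSeries.coeff m G = (Nat.card {l : List ℕ // l.length = m 3 ∧
      IsAscentSeq l ∧ ascList l = m 0 ∧ l.getLastD 0 = m 1 ∧ adjpairs l = m 2} : ℚ) := rfl
  rw [h0]
  norm_cast
  rw [Nat.card_congr (Equiv.subtypeEquivRight (fun l => ?_)), Nat.card_eq_finsetCard]
  rw [Finset.mem_filter, mem_ascFinset]
  constructor
  · rintro ⟨h1, h2, h3, h4, h5⟩
    exact ⟨⟨h1, h2⟩, h3.symm, h4.symm, h5.symm⟩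
  · rintro ⟨⟨h1, h2⟩, h3, h4, h5⟩
    exact ⟨h1, h2, h3.symm, h4.symm, h5.symm⟩

lemma coeff_G_FFN (m : Fin 4 →₀ ℕ) :
    MvPowerSeries.coeff m G = MvPowerSeries.coeff m (1 + FFN u v (m 3)) := by
  rw [map_add, coeff_G_eq]
  unfold FFN
  rw [map_sum, Finset.sum_congr rfl (fun n _ => coeff_FFn_uv m (n + 1))]
  rcases hm3 : m 3 with _ | K
  · simp only [Finset.range_zero, Finset.sum_empty, add_zero]
    rw [MvPowerSeries.coeff_one]
    by_cases hm : m = 0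
    · subst hm
      rw [if_pos rfl, ascFinset_zero, Finset.filter_singleton, if_pos ⟨rfl, rfl, rfl⟩]
      simp
    · rw [if_neg hm]
      have hemp : Finset.filter (fun s => m 0 = ascList s ∧ m 1 = s.getLastD 0 ∧
          m 2 = adjpairs s) (ascFinset 0) = ∅ := by
        rw [Finset.filter_eq_empty_iff]
        intro l hl
        rw [ascFinset_zero, Finset.mem_singleton] at hl
        subst hl
        rintro ⟨h1, h2, h3⟩
        apply hm
        ext x
        fin_cases x
        · exact h1
        · exact h2
        · exact h3
        · exact hm3
      rw [hemp]
      simp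
  · have hm0 : m ≠ 0 := by
      intro h
      rw [h] at hm3
      simp at hm3
    rw [MvPowerSeries.coeff_one, if_neg hm0]
    rw [Finset.sum_eq_single K (fun n _ hn => ?_) (fun h => absurd (Finset.self_mem_range_succ K) h)]
    · rw [zero_add]
      norm_cast
      congr 1
      apply Finset.filter_congr
      intro s _
      simp
    · norm_cast
      rw [Finset.card_eq_zero, Finset.filter_eq_empty_iff]
      rintro l - ⟨-, -, -, h4⟩
      omega


lemma Δ_eq (k : ℕ) : Δ k = Δp u k := rfl
lemma Δb_eq (k : ℕ) : Δb k = Δp (u * v) k := rfl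
lemma Γ_eq (k : ℕ) : Γ k = Γp u k := rfl
lemma Γb_eq (k : ℕ) : Γb k = Γp (u * v) k := rfl

lemma hu : MvPowerSeries.constantCoeff u = 0 := by
  unfold u; simp

lemma huv : MvPowerSeries.constantCoeff (u * v) = 0 := by
  unfold u v; simp

lemma hD : MvPowerSeries.constantCoeff D = -1 := by
  unfold D u v y t; simp

lemma D_inv_mul : D⁻¹ * D = 1 :=
  MvPowerSeries.inv_mul_cancel _ (by rw [hD]; norm_num)

/-- the `n`-th main summand -/
noncomputable def W1p (p : S) (n : ℕ) : S :=
  Ap ^ n * Bp ^ n * ((1 - p) * (∏ i ∈ Finset.Icc 1 n, Γp p i)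
    * (Δp p n)⁻¹ * (Δp p (n + 1))⁻¹)

lemma summand_eq (n : ℕ) :
    (1 - t * y) ^ n * (1 + t - t * y) ^ n *
      ((1 - u) * (∏ i ∈ Finset.Icc 1 n, Γ i) * (Δ n)⁻¹ * (Δ (n + 1))⁻¹ -
        u * v ^ 2 * (1 - u * v) *
          (∏ i ∈ Finset.Icc 1 n, Γb i) * (Δb n)⁻¹ * (Δb (n + 1))⁻¹)
      = W1p u n - u * v ^ 2 * W1p (u * v) n := by
  rw [Δ_eq, Δ_eq, Δb_eq, Δb_eq, Finset.prod_congr rfl (fun i _ => Γ_eq i),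
    Finset.prod_congr rfl (fun i _ => Γb_eq i)]
  unfold W1p Ap Bp
  ring

lemma Pp_mul_En (p : S) (hp : MvPowerSeries.constantCoeff p = 0) (n : ℕ) :
    Pp p n * (t * En p n) = t * W1p p n := by
  rw [Pp_eq p hp n]
  unfold En W1p
  ring

lemma Pp_eq_pow_mul (p : S) (n : ℕ) :
    Pp p n = p ^ n * ∏ k ∈ Finset.range n, (Bp ^ k * (Δp p k)⁻¹ * Vp p k ^ 2) := by
  unfold Pp Γp
  rw [Finset.prod_congr rfl (fun k _ => show p * Bp ^ k * (Δp p k)⁻¹ * Vp p k ^ 2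
      = p * (Bp ^ k * (Δp p k)⁻¹ * Vp p k ^ 2) from by ring),
    Finset.prod_mul_distrib, Finset.prod_const, Finset.card_range]

lemma func_eq (M : ℕ) :
    D * FFN u v M = t * (v - 1) - t * FFN u 1 M + t * u * v ^ 2 * FFN (u * v) 1 M
      - (v - 1) * FFn u v (M + 1) := by
  have hg := global_rec u v M
  have hs := FFN_succ u v M
  unfold D
  linear_combination hg - (v - 1) * hs

lemma FFn_def (w z : S) (k : ℕ) : FFn w z k = t ^ k * ∑ s ∈ ascFinset k, Wgt w z s := rfl

lemma coeff_kill (m : Fin 4 →₀ ℕ) (i : Fin 4) (k : ℕ) (hk : m i < k) (X Y : S)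
    (h : X = MvPowerSeries.X i ^ k * Y) : MvPowerSeries.coeff m X = 0 :=
  h ▸ coeff_X_pow_mul_eq_zero hk Y

lemma coeff_mul_FFn_zero {m : Fin 4 →₀ ℕ} {k : ℕ} (hk : m 3 < k) (C w z : S) :
    MvPowerSeries.coeff m (C * FFn w z k) = 0 :=
  coeff_kill m 3 k hk _ (C * ∑ s ∈ ascFinset k, Wgt w z s)
    (by rw [FFn_def]; unfold t; ring)

lemma coeff_mul_PpU_zero {m : Fin 4 →₀ ℕ} {N : ℕ} (hN : m 0 < N) (C : S) :
    MvPowerSeries.coeff m (C * Pp u N) = 0 :=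
  coeff_kill m 0 N hN _
    (C * ∏ k ∈ Finset.range N, (Bp ^ k * (Δp u k)⁻¹ * Vp u k ^ 2))
    (by rw [Pp_eq_pow_mul]; unfold u; ring)

lemma coeff_mul_PpUV_zero {m : Fin 4 →₀ ℕ} {N : ℕ} (hN : m 0 < N) (C : S) :
    MvPowerSeries.coeff m (C * Pp (u * v) N) = 0 :=
  coeff_kill m 0 N hN _
    (C * (v ^ N * ∏ k ∈ Finset.range N, (Bp ^ k * (Δp (u * v) k)⁻¹ * Vp (u * v) k ^ 2)))
    (by rw [Pp_eq_pow_mul]; unfold u v; ring)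

/-- the closed form for `G`, coefficientwise (the `n`-th summand of the
inner sum is divisible by `u^n`, so the coefficient at a monomial with `u`-exponent
`m 0` is captured by any partial sum over `n < N` with `N > m 0`). -/
theorem stmt_10 (m : Fin 4 →₀ ℕ) (N : ℕ) (hN : m 0 < N) :
    MvPowerSeries.coeff m G =
      MvPowerSeries.coeff m
        (1 + t * D⁻¹ * ((v - 1) - t *
          ∑ n ∈ Finset.range N,
            (1 - t * y) ^ n * (1 + t - t * y) ^ n *
              ((1 - u) * (∏ i ∈ Finset.Icc 1 n, Γ i) * (Δ n)⁻¹ * (Δ (n + 1))⁻¹ -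
                u * v ^ 2 * (1 - u * v) *
                  (∏ i ∈ Finset.Icc 1 n, Γb i) * (Δb n)⁻¹ * (Δb (n + 1))⁻¹))) := by
  classical
  rw [coeff_G_FFN m]
  rw [Finset.sum_congr rfl (fun n _ => summand_eq n)]
  have tel1 := telescope u hu (m 3) N
  have tel2 := telescope (u * v) huv (m 3) N
  have hsplit : ∀ p : S, (∑ n ∈ Finset.range N, Pp p n
      * (t * En p n - En p n * FFn (Γp p n) (Vp p n) (m 3 + 1)))
      = (∑ n ∈ Finset.range N, Pp p n * (t * En p n))
        - ∑ n ∈ Finset.range N, Pp p n * (En p n * FFn (Γp p n) (Vp p n) (m 3 + 1)) := by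
    intro p
    rw [← Finset.sum_sub_distrib]
    exact Finset.sum_congr rfl fun n _ => by ring
  rw [hsplit] at tel1 tel2
  rw [Finset.sum_congr rfl (fun n _ => Pp_mul_En u hu n)] at tel1
  rw [Finset.sum_congr rfl (fun n _ => Pp_mul_En (u * v) huv n)] at tel2
  rw [← Finset.mul_sum] at tel1 tel2
  set E1 : S := ∑ n ∈ Finset.range N,
    Pp u n * (En u n * FFn (Γp u n) (Vp u n) (m 3 + 1)) with hE1
  set E2 : S := ∑ n ∈ Finset.range N,
    Pp (u * v) n * (En (u * v) n * FFn (Γp (u * v) n) (Vp (u * v) n) (m 3 + 1)) with hE2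
  set R1 : S := Pp u N * FFN (Γp u N) 1 (m 3) with hR1
  set R2 : S := Pp (u * v) N * FFN (Γp (u * v) N) 1 (m 3) with hR2
  set SW : S := ∑ n ∈ Finset.range N, (W1p u n - u * v ^ 2 * W1p (u * v) n) with hSW
  set EE : S := t * E1 - t * R1 - t * u * v ^ 2 * E2 + t * u * v ^ 2 * R2
    - (v - 1) * FFn u v (m 3 + 1) with hEE
  have main : D * FFN u v (m 3) = t * ((v - 1) - t * SW) + EE := by
    have hfe := func_eq (m 3)
    rw [tel1, tel2] at hfe
    rw [hfe, hSW, hEE]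
    rw [Finset.sum_sub_distrib, ← Finset.mul_sum]
    ring
  have series_eq : (1 : S) + FFN u v (m 3)
      = (1 + t * D⁻¹ * ((v - 1) - t * SW)) + D⁻¹ * EE := by
    have hDF : FFN u v (m 3) = D⁻¹ * (D * FFN u v (m 3)) := by
      rw [← mul_assoc, D_inv_mul, one_mul]
    rw [hDF, main]
    ring
  rw [series_eq, map_add]
  have hkill : MvPowerSeries.coeff m (D⁻¹ * EE) = 0 := by
    have e0 : D⁻¹ * EE = D⁻¹ * (t * E1) - D⁻¹ * (t * u * v ^ 2 * E2)
        - D⁻¹ * (t * R1) + D⁻¹ * (t * u * v ^ 2 * R2)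
        - D⁻¹ * ((v - 1) * FFn u v (m 3 + 1)) := by
      rw [hEE]; ring
    have hz1 : MvPowerSeries.coeff m (D⁻¹ * (t * E1)) = 0 := by
      rw [hE1, Finset.mul_sum, Finset.mul_sum, map_sum]
      refine Finset.sum_eq_zero fun n _ => ?_
      rw [show D⁻¹ * (t * (Pp u n * (En u n * FFn (Γp u n) (Vp u n) (m 3 + 1))))
        = (D⁻¹ * (t * (Pp u n * En u n))) * FFn (Γp u n) (Vp u n) (m 3 + 1) from by ring]
      exact coeff_mul_FFn_zero (by omega) _ _ _
    have hz2 : MvPowerSeries.coeff m (D⁻¹ * (t * u * v ^ 2 * E2)) = 0 := by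
      rw [hE2, Finset.mul_sum, Finset.mul_sum, map_sum]
      refine Finset.sum_eq_zero fun n _ => ?_
      rw [show D⁻¹ * (t * u * v ^ 2 * (Pp (u * v) n * (En (u * v) n
            * FFn (Γp (u * v) n) (Vp (u * v) n) (m 3 + 1))))
        = (D⁻¹ * (t * u * v ^ 2 * (Pp (u * v) n * En (u * v) n)))
            * FFn (Γp (u * v) n) (Vp (u * v) n) (m 3 + 1) from by ring]
      exact coeff_mul_FFn_zero (by omega) _ _ _
    have hz3 : MvPowerSeries.coeff m (D⁻¹ * (t * R1)) = 0 := by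
      rw [hR1, show D⁻¹ * (t * (Pp u N * FFN (Γp u N) 1 (m 3)))
        = (D⁻¹ * (t * FFN (Γp u N) 1 (m 3))) * Pp u N from by ring]
      exact coeff_mul_PpU_zero hN _
    have hz4 : MvPowerSeries.coeff m (D⁻¹ * (t * u * v ^ 2 * R2)) = 0 := by
      rw [hR2, show D⁻¹ * (t * u * v ^ 2 * (Pp (u * v) N * FFN (Γp (u * v) N) 1 (m 3)))
        = (D⁻¹ * (t * u * v ^ 2 * FFN (Γp (u * v) N) 1 (m 3))) * Pp (u * v) N from by ring]
      exact coeff_mul_PpUV_zero hN _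
    have hz5 : MvPowerSeries.coeff m (D⁻¹ * ((v - 1) * FFn u v (m 3 + 1))) = 0 := by
      rw [show D⁻¹ * ((v - 1) * FFn u v (m 3 + 1))
        = (D⁻¹ * (v - 1)) * FFn u v (m 3 + 1) from by ring]
      exact coeff_mul_FFn_zero (by omega) _ _ _
    rw [e0]
    simp only [map_sub, map_add]
    rw [hz1, hz2, hz3, hz4, hz5]
    norm_num
  rw [hkill, add_zero]


end Stmt10
end

section
/- For all integers n ≥ 0 and k ≥ 1, the number of ascent sequences of length n all of whose runs have length at most k equals the number of permutations in R_n^(k), i.e., |A_n^(k)| = |R_n^(k)|. -/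
namespace S14

/-- Occurrence of the forbidden pattern in a list-permutation. -/
def Occ (p : List ℕ) : Prop :=
  ∃ i k, k < p.length ∧ i + 1 < k ∧ p.getD k 0 + 1 = p.getD i 0 ∧ p.getD i 0 < p.getD (i+1) 0

def Rl (p : List ℕ) : Prop := ¬ Occ p

/-- Site `s` is blocked: inserting a new maximum there creates an occurrence. -/
def Blocked (p : List ℕ) (s : ℕ) : Prop :=
  ∃ t < p.length, s ≤ t ∧ 1 ≤ s ∧ p.getD t 0 + 1 = p.getD (s-1) 0

instance (p : List ℕ) (s : ℕ) : Decidable (Blocked p s) :=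
  inferInstanceAs (Decidable (∃ t < p.length, _ ∧ _ ∧ _))

/-- number of active sites strictly below `s`. -/
def cb (p : List ℕ) (s : ℕ) : ℕ := (List.range s).countP (fun u => decide (¬ Blocked p u))

/-- number of active sites. -/
def NA (p : List ℕ) : ℕ := cb p (p.length + 1)

noncomputable def pos (p : List ℕ) (a : ℕ) : ℕ := sInf {i | i < p.length ∧ p.getD i 0 = a}

def ins (s m : ℕ) (p : List ℕ) : List ℕ := p.take s ++ m :: p.drop s

noncomputable def site (p : List ℕ) (v : ℕ) : ℕ :=
  sInf {s | s ≤ p.length ∧ ¬ Blocked p s ∧ cb p s = v}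

noncomputable def bd : List ℕ → List ℕ
  | [] => []
  | v :: y => ins (site (bd y) v) y.length (bd y)

noncomputable def build (x : List ℕ) : List ℕ := bd x.reverse

def PermOf (n : ℕ) (p : List ℕ) : Prop :=
  p.length = n ∧ p.Nodup ∧ ∀ a, a ∈ p ↔ a < n

def NoDescList (k : ℕ) (p : List ℕ) : Prop :=
  ¬ ∃ i, i + k < p.length ∧ ∀ j ≤ k, p.getD (i+j) 0 = p.getD i 0 - j

def Inv (x p : List ℕ) : Prop :=
  PermOf x.length p ∧ Rl p ∧ NA p = 2 + ascList x ∧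
  cb p (pos p (x.length - 1)) = x.getD (x.length - 1) 0 ∧
  ¬ Blocked p (pos p (x.length - 1)) ∧
  (∀ a, 1 ≤ a → a < x.length →
    (pos p (a-1) = pos p a + 1 ↔ x.getD a 0 = x.getD (a-1) 0))

section lemmas
variable {p : List ℕ} {s m u v a b i n : ℕ}

theorem length_ins (hs : s ≤ p.length) : (ins s m p).length = p.length + 1 := by
  simp [ins]; omega

theorem getD_ins (hs : s ≤ p.length) (i : ℕ) :
    (ins s m p).getD i 0 =
      if i < s then p.getD i 0 else if i = s then m else p.getD (i-1) 0 := by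
  have hlt : (p.take s).length = s := by simp [List.length_take]; omega
  rcases lt_trichotomy i s with h | h | h
  · rw [ins, List.getD_append _ _ _ _ (by omega), if_pos h]
    rcases Nat.lt_or_ge i p.length with h2 | h2
    · rw [List.getD_eq_getElem _ _ (by simp [hlt]; omega), List.getD_eq_getElem _ _ h2]
      simp [List.getElem_take]
    · omega
  · subst h
    rw [ins, List.getD_append_right _ _ _ _ (by omega), hlt]
    simp
  · rw [ins, List.getD_append_right _ _ _ _ (by omega), hlt, if_neg (by omega), if_neg (by omega)]
    have : i - s = (i - s - 1) + 1 := by omega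
    rw [this]
    simp only [List.getD_cons_succ]
    rcases Nat.lt_or_ge (i - 1) p.length with h2 | h2
    · rw [List.getD_eq_getElem _ _ (by simp; omega), List.getD_eq_getElem _ _ h2]
      rw [List.getElem_drop]
      congr 1
      omega
    · rw [List.getD_eq_default _ _ (by simp; omega), List.getD_eq_default _ _ (by omega)]

theorem perm_ins (hs : s ≤ p.length) : (ins s m p).Perm (m :: p) := by
  calc (ins s m p).Perm (m :: (p.take s ++ p.drop s)) := List.perm_middle
    _ = m :: p := by rw [List.take_append_drop]

theorem mem_getD (h : i < p.length) : p.getD i 0 ∈ p := by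
  rw [List.getD_eq_getElem _ _ h]; exact List.getElem_mem _

theorem pos_spec (h : a ∈ p) : pos p a < p.length ∧ p.getD (pos p a) 0 = a := by
  have : ∃ i, i < p.length ∧ p.getD i 0 = a := by
    obtain ⟨i, hi, he⟩ := List.getElem_of_mem h
    exact ⟨i, hi, by rw [List.getD_eq_getElem _ _ hi]; exact he⟩
  exact Nat.sInf_mem this

theorem pos_eq (hn : p.Nodup) (h : i < p.length) (hv : p.getD i 0 = a) : pos p a = i := by
  have hmem : a ∈ p := hv ▸ mem_getD h
  obtain ⟨h1, h2⟩ := pos_spec hmem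
  have : p[pos p a]'h1 = p[i]'h := by
    rw [← List.getD_eq_getElem _ 0 h1, ← List.getD_eq_getElem _ 0 h, h2, hv]
  exact (List.Nodup.getElem_inj_iff hn).mp this

theorem getD_lt_of_bound (hb : ∀ b ∈ p, b < m) (h : i < p.length) : p.getD i 0 < m :=
  hb _ (mem_getD h)

theorem blocked_ins_le (hs : s ≤ p.length) (hb : ∀ b ∈ p, b < m) (hu : u ≤ s) :
    Blocked (ins s m p) u ↔ Blocked p u := by
  have hq := getD_ins (m := m) (p := p) hs
  have hlen := length_ins (m := m) (p := p) hs
  constructor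
  · rintro ⟨t, ht1, ht2, ht3, ht4⟩
    rw [hlen] at ht1
    rw [hq t, hq (u-1), if_pos (show u-1 < s by omega)] at ht4
    by_cases h : t < s
    · rw [if_pos h] at ht4
      exact ⟨t, by omega, ht2, ht3, ht4⟩
    · by_cases h2 : t = s
      · rw [if_neg h, if_pos h2] at ht4
        have hbd : p.getD (u-1) 0 < m := getD_lt_of_bound hb (by omega)
        omega
      · rw [if_neg h, if_neg h2] at ht4
        exact ⟨t-1, by omega, by omega, ht3, ht4⟩
  · rintro ⟨t, ht1, ht2, ht3, ht4⟩
    by_cases h : t < s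
    · refine ⟨t, ?_, ht2, ht3, ?_⟩
      · rw [hlen]; omega
      · rw [hq t, hq (u-1), if_pos h, if_pos (show u-1 < s by omega)]
        exact ht4
    · refine ⟨t+1, ?_, by omega, ht3, ?_⟩
      · rw [hlen]; omega
      · rw [hq (t+1), hq (u-1), if_neg (show ¬ t+1 < s by omega),
          if_neg (show ¬ t+1 = s by omega), if_pos (show u-1 < s by omega)]
        simpa using ht4

theorem blocked_ins_gt (hs : s ≤ p.length) (hu : s + 2 ≤ u) :
    Blocked (ins s m p) u ↔ Blocked p (u-1) := by
  have hq := getD_ins (m := m) (p := p) hs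
  have hlen := length_ins (m := m) (p := p) hs
  constructor
  · rintro ⟨t, ht1, ht2, ht3, ht4⟩
    rw [hlen] at ht1
    rw [hq t, hq (u-1), if_neg (show ¬ t < s by omega), if_neg (show ¬ t = s by omega),
      if_neg (show ¬ u-1 < s by omega), if_neg (show ¬ u-1 = s by omega)] at ht4
    exact ⟨t-1, by omega, by omega, by omega, ht4⟩
  · rintro ⟨t, ht1, ht2, ht3, ht4⟩
    refine ⟨t+1, ?_, by omega, by omega, ?_⟩
    · rw [hlen]; omega
    · rw [hq (t+1), hq (u-1), if_neg (show ¬ t+1 < s by omega),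
        if_neg (show ¬ t+1 = s by omega), if_neg (show ¬ u-1 < s by omega),
        if_neg (show ¬ u-1 = s by omega)]
      simpa using ht4

theorem blocked_ins_succ (hs : s ≤ p.length) (hn : p.Nodup) (hm : 1 ≤ m)
    (hmem : m - 1 ∈ p) :
    Blocked (ins s m p) (s+1) ↔ s ≤ pos p (m-1) := by
  have hq := getD_ins (m := m) (p := p) hs
  have hlen := length_ins (m := m) (p := p) hs
  obtain ⟨hp1, hp2⟩ := pos_spec hmem
  constructor
  · rintro ⟨t, ht1, ht2, ht3, ht4⟩
    rw [hlen] at ht1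
    simp only [Nat.add_sub_cancel] at ht4
    rw [hq t, hq s, if_neg (show ¬ t < s by omega), if_neg (show ¬ t = s by omega),
      if_neg (show ¬ s < s by omega), if_pos rfl] at ht4
    have he : p.getD (t-1) 0 = m - 1 := by omega
    have := pos_eq hn (i := t-1) (by omega) he
    omega
  · intro h
    refine ⟨pos p (m-1) + 1, ?_, by omega, by omega, ?_⟩
    · rw [hlen]; omega
    · simp only [Nat.add_sub_cancel]
      rw [hq (pos p (m-1) + 1), hq s, if_neg (show ¬ pos p (m-1) + 1 < s by omega),
        if_neg (show ¬ pos p (m-1) + 1 = s by omega), if_neg (show ¬ s < s by omega),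
        if_pos rfl]
      simp only [Nat.add_sub_cancel]
      omega

theorem occ_ins (hs : s ≤ p.length) (hb : ∀ b ∈ p, b < m) (h : Occ p) :
    Occ (ins s m p) := by
  obtain ⟨i, k, hk, hik, hv1, hv2⟩ := h
  have hq := getD_ins (m := m) (p := p) hs
  have hlen := length_ins (m := m) (p := p) hs
  by_cases h1 : s ≤ i
  · refine ⟨i+1, k+1, ?_, by omega, ?_, ?_⟩
    · rw [hlen]; omega
    · rw [hq (k+1), hq (i+1), if_neg (show ¬ k+1 < s by omega),
        if_neg (show ¬ k+1 = s by omega), if_neg (show ¬ i+1 < s by omega),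
        if_neg (show ¬ i+1 = s by omega)]
      simpa using hv1
    · rw [hq (i+1), hq (i+1+1), if_neg (show ¬ i+1 < s by omega),
        if_neg (show ¬ i+1 = s by omega), if_neg (show ¬ i+1+1 < s by omega),
        if_neg (show ¬ i+1+1 = s by omega)]
      simpa using hv2
  · by_cases h2 : i + 1 < s
    · by_cases h3 : k < s
      · refine ⟨i, k, ?_, hik, ?_, ?_⟩
        · rw [hlen]; omega
        · rw [hq k, hq i, if_pos h3, if_pos (show i < s by omega)]
          exact hv1
        · rw [hq i, hq (i+1), if_pos (show i < s by omega), if_pos h2]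
          exact hv2
      · refine ⟨i, k+1, ?_, by omega, ?_, ?_⟩
        · rw [hlen]; omega
        · rw [hq (k+1), hq i, if_neg (show ¬ k+1 < s by omega),
            if_neg (show ¬ k+1 = s by omega), if_pos (show i < s by omega)]
          simpa using hv1
        · rw [hq i, hq (i+1), if_pos (show i < s by omega), if_pos h2]
          exact hv2
    · -- s = i + 1
      have h2' : s = i + 1 := by omega
      refine ⟨i, k+1, ?_, by omega, ?_, ?_⟩
      · rw [hlen]; omega
      · rw [hq (k+1), hq i, if_neg (show ¬ k+1 < s by omega),
          if_neg (show ¬ k+1 = s by omega), if_pos (show i < s by omega)]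
        simpa using hv1
      · rw [hq i, hq (i+1), if_pos (show i < s by omega), if_neg (show ¬ i+1 < s by omega),
          if_pos (show i+1 = s by omega)]
        exact getD_lt_of_bound hb (by omega)

theorem occ_of_ins (hs : s ≤ p.length) (hb : ∀ b ∈ p, b < m)
    (h : Occ (ins s m p)) : Blocked p s ∨ Occ p := by
  obtain ⟨i, k, hk, hik, hv1, hv2⟩ := h
  have hq := getD_ins (m := m) (p := p) hs
  have hlen := length_ins (m := m) (p := p) hs
  rw [hlen] at hk
  rw [hq k, hq i] at hv1
  rw [hq i, hq (i+1)] at hv2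
  by_cases hks : k = s
  · exfalso
    rw [if_neg (show ¬ k < s by omega), if_pos hks,
      if_pos (show i < s by omega)] at hv1
    have := getD_lt_of_bound hb (i := i) (by omega)
    omega
  · by_cases his : i = s
    · exfalso
      rw [if_neg (show ¬ i < s by omega), if_pos his, if_neg (show ¬ i+1 < s by omega),
        if_neg (show ¬ i+1 = s by omega)] at hv2
      simp only [Nat.add_sub_cancel] at hv2
      rcases Nat.lt_or_ge i p.length with hc | hc
      · have := getD_lt_of_bound hb (i := i) hc
        omega
      · rw [List.getD_eq_default _ _ (by omega)] at hv2
        omega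
    · by_cases h1 : i < s
      · by_cases h2 : i + 1 < s
        · rw [if_pos h1, if_pos h2] at hv2
          by_cases h3 : k < s
          · rw [if_pos h3, if_pos h1] at hv1
            exact Or.inr ⟨i, k, by omega, hik, hv1, hv2⟩
          · rw [if_neg h3, if_neg hks, if_pos h1] at hv1
            exact Or.inr ⟨i, k-1, by omega, by omega, hv1, hv2⟩
        · have h2' : s = i + 1 := by omega
          have h3 : s < k := by omega
          rw [if_neg (show ¬ k < s by omega), if_neg hks, if_pos h1] at hv1
          refine Or.inl ⟨k-1, by omega, by omega, by omega, ?_⟩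
          have e : s - 1 = i := by omega
          rw [e]
          exact hv1
      · have h1' : s < i := by omega
        rw [if_neg (show ¬ i < s by omega), if_neg his, if_neg (show ¬ i+1 < s by omega),
          if_neg (show ¬ i+1 = s by omega)] at hv2
        rw [if_neg (show ¬ k < s by omega), if_neg hks, if_neg (show ¬ i < s by omega),
          if_neg his] at hv1
        refine Or.inr ⟨i-1, k-1, by omega, by omega, hv1, ?_⟩
        have e : i + 1 - 1 = (i-1)+1 := by omega
        rw [e] at hv2
        exact hv2

theorem blocked_occ (hs : s ≤ p.length) (hb : ∀ b ∈ p, b < m) (h : Blocked p s) :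
    Occ (ins s m p) := by
  obtain ⟨t, ht1, ht2, ht3, ht4⟩ := h
  have hq := getD_ins (m := m) (p := p) hs
  have hlen := length_ins (m := m) (p := p) hs
  refine ⟨s-1, t+1, ?_, by omega, ?_, ?_⟩
  · rw [hlen]; omega
  · rw [hq (t+1), hq (s-1), if_neg (show ¬ t+1 < s by omega),
      if_neg (show ¬ t+1 = s by omega), if_pos (show s-1 < s by omega)]
    simpa using ht4
  · rw [hq (s-1), hq (s-1+1), if_pos (show s-1 < s by omega),
      if_neg (show ¬ s-1+1 < s by omega), if_pos (show s-1+1 = s by omega)]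
    exact getD_lt_of_bound hb (by omega)

theorem cb_succ : cb p (s+1) = cb p s + (if Blocked p s then 0 else 1) := by
  unfold cb
  rw [List.range_succ, List.countP_append]
  by_cases h : Blocked p s <;> simp [h]

theorem cb_mono (h : s ≤ u) : cb p s ≤ cb p u := by
  induction u, h using Nat.le_induction with
  | base => exact le_refl _
  | succ u hu ih => rw [cb_succ]; omega

theorem cb_lt (h2 : ¬ Blocked p s) (h : s < u) : cb p s < cb p u := by
  have h1 : cb p (s+1) ≤ cb p u := cb_mono h
  rw [cb_succ, if_neg h2] at h1
  omega

theorem exists_cb {u : ℕ} (h : v < cb p u) : ∃ s, s < u ∧ ¬ Blocked p s ∧ cb p s = v := by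
  induction u with
  | zero => simp [cb] at h
  | succ u ih =>
    rw [cb_succ] at h
    by_cases hb : Blocked p u
    · rw [if_pos hb] at h
      obtain ⟨s, h1, h2, h3⟩ := ih (by omega)
      exact ⟨s, by omega, h2, h3⟩
    · rw [if_neg hb] at h
      rcases Nat.lt_or_ge v (cb p u) with h' | h'
      · obtain ⟨s, h1, h2, h3⟩ := ih h'
        exact ⟨s, by omega, h2, h3⟩
      · exact ⟨u, by omega, hb, by omega⟩

theorem site_spec (h : v < NA p) :
    site p v ≤ p.length ∧ ¬ Blocked p (site p v) ∧ cb p (site p v) = v := by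
  unfold NA at h
  obtain ⟨s, h1, h2, h3⟩ := exists_cb h
  exact Nat.sInf_mem (⟨s, by omega, h2, h3⟩ :
    {s | s ≤ p.length ∧ ¬ Blocked p s ∧ cb p s = v}.Nonempty)

theorem lt_NA (h1 : s ≤ p.length) (h2 : ¬ Blocked p s) : cb p s < NA p := by
  unfold NA
  exact cb_lt h2 (by omega)

theorem site_eq (h1 : s ≤ p.length) (h2 : ¬ Blocked p s) (h3 : cb p s = v) :
    site p v = s := by
  have hv : v < NA p := h3 ▸ lt_NA h1 h2
  obtain ⟨g1, g2, g3⟩ := site_spec hv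
  rcases lt_trichotomy (site p v) s with h | h | h
  · have := cb_lt g2 h
    omega
  · exact h
  · have := cb_lt h2 h
    omega

theorem cb_ins_le (hs : s ≤ p.length) (hb : ∀ b ∈ p, b < m) (hu : u ≤ s + 1) :
    cb (ins s m p) u = cb p u := by
  unfold cb
  apply List.countP_congr
  intro w hw
  rw [List.mem_range] at hw
  simp [blocked_ins_le hs hb (show w ≤ s by omega)]

theorem cb_ins_ge (hs : s ≤ p.length) (hn : p.Nodup) (hm : 1 ≤ m) (hmem : m - 1 ∈ p)
    (hb : ∀ b ∈ p, b < m) (hu : s + 1 ≤ u) :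
    cb (ins s m p) (u+1) = cb p u + (if s ≤ pos p (m-1) then 0 else 1) := by
  induction u, hu using Nat.le_induction with
  | base =>
    rw [cb_succ, cb_ins_le hs hb (le_refl _)]
    have hbs := blocked_ins_succ (m := m) hs hn hm hmem
    by_cases hc : s ≤ pos p (m-1)
    · rw [if_pos (hbs.mpr hc), if_pos hc]
    · rw [if_neg (fun hB => hc (hbs.mp hB)), if_neg hc]
  | succ u hu ih =>
    rw [cb_succ, ih]
    have hbg := blocked_ins_gt (m := m) hs (show s + 2 ≤ u + 1 by omega)
    simp only [Nat.add_sub_cancel] at hbg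
    rw [cb_succ (p := p) (s := u)]
    by_cases hB : Blocked p u
    · rw [if_pos (hbg.mpr hB), if_pos hB]; omega
    · rw [if_neg (fun h => hB (hbg.mp h)), if_neg hB]; omega

theorem NA_ins (hs : s ≤ p.length) (hn : p.Nodup) (hm : 1 ≤ m) (hmem : m - 1 ∈ p)
    (hb : ∀ b ∈ p, b < m) :
    NA (ins s m p) = NA p + (if s ≤ pos p (m-1) then 0 else 1) := by
  unfold NA
  rw [length_ins hs]
  exact cb_ins_ge hs hn hm hmem hb (by omega)

theorem getD_snoc (x : List ℕ) (v i : ℕ) :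
    (x ++ [v]).getD i 0 = if i < x.length then x.getD i 0 else if i = x.length then v else 0 := by
  by_cases h : i < x.length
  · rw [if_pos h, List.getD_append _ _ _ _ h]
  · rw [if_neg h, List.getD_append_right _ _ _ _ (by omega)]
    by_cases h2 : i = x.length
    · rw [if_pos h2, h2]
      simp
    · rw [if_neg h2, List.getD_eq_default]
      simp
      omega

theorem ascList_snoc (hx : x ≠ []) (v : ℕ) :
    ascList (x ++ [v]) = ascList x + (if x.getD (x.length - 1) 0 < v then 1 else 0) := by
  have hL : 1 ≤ x.length := by
    cases x with
    | nil => exact absurd rfl hx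
    | cons a y => simp
  unfold ascList
  have e1 : (x ++ [v]).length - 1 = x.length := by simp
  rw [e1]
  have e2 : x.length = (x.length - 1) + 1 := by omega
  rw [e2, List.range_succ, List.countP_append]
  have e3 : ∀ j ∈ List.range (x.length - 1),
      (decide ((x ++ [v]).getD j 0 < (x ++ [v]).getD (j+1) 0) = true)
        ↔ (decide (x.getD j 0 < x.getD (j+1) 0) = true) := by
    intro j hj
    rw [List.mem_range] at hj
    rw [getD_snoc, getD_snoc, if_pos (by omega), if_pos (by omega)]
  rw [List.countP_congr (q := fun j => decide (x.getD j 0 < x.getD (j+1) 0)) e3]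
  congr 1
  have e4 : (x ++ [v]).getD (x.length - 1) 0 = x.getD (x.length - 1) 0 := by
    rw [getD_snoc, if_pos (by omega)]
  have e5 : (x ++ [v]).getD (x.length - 1 + 1) 0 = v := by
    rw [getD_snoc, if_neg (by omega), if_pos (by omega)]
  simp only [List.countP, List.countP.go, e4, e5]
  by_cases h : x.getD (x.length - 1) 0 < v <;> simp [h]

theorem isAscentSeq_snoc (hx : x ≠ []) (v : ℕ) :
    IsAscentSeq (x ++ [v]) ↔ IsAscentSeq x ∧ v ≤ 1 + ascList x := by
  have hL : 1 ≤ x.length := by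
    cases x with
    | nil => exact absurd rfl hx
    | cons a y => simp
  constructor
  · rintro ⟨h0, h1⟩
    refine ⟨⟨?_, ?_⟩, ?_⟩
    · rw [getD_snoc, if_pos (by omega)] at h0
      exact h0
    · intro i hi hi2
      have := h1 i hi (by simp; omega)
      rw [getD_snoc, if_pos (by omega),
        List.take_append_of_le_length (by omega)] at this
      exact this
    · have := h1 x.length (by omega) (by simp)
      rw [getD_snoc, if_neg (by omega), if_pos rfl, List.take_left] at this
      exact this
  · rintro ⟨⟨h0, h1⟩, h2⟩
    refine ⟨?_, ?_⟩
    · rw [getD_snoc, if_pos (by omega)]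
      exact h0
    · intro i hi hi2
      simp only [List.length_append, List.length_singleton] at hi2
      by_cases h : i < x.length
      · rw [getD_snoc, if_pos h, List.take_append_of_le_length (by omega)]
        exact h1 i hi h
      · have : i = x.length := by omega
        rw [getD_snoc, if_neg (by omega), if_pos this, this, List.take_left]
        exact h2

theorem nodup_ins (hs : s ≤ p.length) (hn : p.Nodup) (hm : m ∉ p) : (ins s m p).Nodup :=
  ((perm_ins hs).nodup_iff).mpr (by simp [hn, hm])

theorem mem_ins (hs : s ≤ p.length) : a ∈ ins s m p ↔ a = m ∨ a ∈ p := by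
  rw [(perm_ins (m := m) hs).mem_iff]
  simp

theorem pos_ins_self (hs : s ≤ p.length) (hn : p.Nodup) (hm : m ∉ p) :
    pos (ins s m p) m = s := by
  apply pos_eq (nodup_ins hs hn hm)
  · rw [length_ins hs]; omega
  · rw [getD_ins hs, if_neg (by omega), if_pos rfl]

theorem pos_ins_ne (hs : s ≤ p.length) (hn : p.Nodup) (hm : m ∉ p) (ha : a ∈ p) :
    pos (ins s m p) a = if pos p a < s then pos p a else pos p a + 1 := by
  obtain ⟨h1, h2⟩ := pos_spec ha
  by_cases h : pos p a < s
  · rw [if_pos h]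
    apply pos_eq (nodup_ins hs hn hm)
    · rw [length_ins hs]; omega
    · rw [getD_ins hs, if_pos h]
      exact h2
  · rw [if_neg h]
    apply pos_eq (nodup_ins hs hn hm)
    · rw [length_ins hs]; omega
    · rw [getD_ins hs, if_neg (by omega), if_neg (by omega)]
      simpa using h2

theorem pos_ne_pos (hn : p.Nodup) (ha : a ∈ p) (hb2 : b ∈ p) (hab : a ≠ b) :
    pos p a ≠ pos p b := by
  intro h
  obtain ⟨h1, h2⟩ := pos_spec ha
  obtain ⟨h3, h4⟩ := pos_spec hb2
  rw [h] at h2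
  apply hab
  rw [← h2, h4]

theorem inv_step (hx : Inv x p) (hxe : x ≠ []) (hv : v ≤ 1 + ascList x) :
    Inv (x ++ [v]) (ins (site p v) x.length p) := by
  obtain ⟨⟨hl, hn, hmem⟩, hR, hNA, hcb, hact, hadj⟩ := hx
  have hL : 1 ≤ x.length := by
    cases x with
    | nil => exact absurd rfl hxe
    | cons a y => simp
  set m := x.length with hmdef
  have hb : ∀ b ∈ p, b < m := fun b h => (hmem b).1 h
  have hmnotin : m ∉ p := fun h => absurd ((hmem m).1 h) (lt_irrefl m)
  have hmem1 : m - 1 ∈ p := (hmem _).2 (by omega)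
  have hvNA : v < NA p := by omega
  obtain ⟨hs_le, hs_act, hs_cb⟩ := site_spec hvNA
  set s := site p v with hsdef
  have hlp : p.length = m := hl
  set t := pos p (m - 1) with htdef
  have ht_le : t < p.length := (pos_spec hmem1).1
  have ht_val : p.getD t 0 = m - 1 := (pos_spec hmem1).2
  -- key trichotomy facts
  have key1 : s < t → v < x.getD (m-1) 0 := fun h => by
    have := cb_lt hs_act h; omega
  have key2 : t < s → x.getD (m-1) 0 < v := fun h => by
    have := cb_lt hact h; omega
  have key3 : s = t → v = x.getD (m-1) 0 := fun h => by rw [h] at hs_cb; omega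
  have keyiff : t < s ↔ x.getD (m-1) 0 < v := by
    constructor
    · exact key2
    · intro h
      rcases lt_trichotomy s t with h' | h' | h'
      · have := key1 h'; omega
      · have := key3 h'; omega
      · exact h'
  have hlen2 : (x ++ [v]).length = m + 1 := by simp [hmdef]
  have hlen3 : (x ++ [v]).length - 1 = m := by simp [hmdef]
  have hq_posm : pos (ins s m p) m = s := pos_ins_self hs_le hn hmnotin
  refine ⟨⟨?_, ?_, ?_⟩, ?_, ?_, ?_, ?_, ?_⟩
  · rw [hlen2, length_ins hs_le, hlp]
  · exact nodup_ins hs_le hn hmnotin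
  · intro a
    rw [mem_ins hs_le, hmem a, hlen2]
    omega
  · intro hOcc
    rcases occ_of_ins hs_le hb hOcc with h | h
    · exact hs_act h
    · exact hR h
  · rw [NA_ins hs_le hn hL hmem1 hb, hNA, ascList_snoc hxe]
    by_cases h : x.getD (m-1) 0 < v
    · rw [if_neg (by omega), if_pos h]
      omega
    · rw [if_pos (by rw [← htdef]; omega), if_neg h]
      omega
  · rw [hlen3, hq_posm, cb_ins_le hs_le hb (by omega), getD_snoc, if_neg (by omega),
      if_pos rfl]
    exact hs_cb
  · rw [hlen3, hq_posm]
    rw [blocked_ins_le hs_le hb (le_refl s)]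
    exact hs_act
  · intro a ha1 ha2
    rw [hlen2] at ha2
    by_cases ham : a = m
    · subst ham
      rw [getD_snoc, if_neg (by omega), if_pos rfl, getD_snoc, if_pos (by omega)]
      rw [hq_posm]
      rw [pos_ins_ne hs_le hn hmnotin hmem1]
      rw [← htdef]
      constructor
      · intro h
        by_cases hc : t < s
        · rw [if_pos hc] at h; omega
        · rw [if_neg hc] at h
          have : s = t := by omega
          have := key3 this
          omega
      · intro h
        have hst : s = t := by
          rcases lt_trichotomy s t with h' | h' | h'
          · have := key1 h'; omega
          · exact h'
          · have := key2 h'; omega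
        rw [if_neg (by omega)]
        omega
    · have ha3 : a < m := by omega
      have haP : a ∈ p := (hmem a).2 ha3
      have haP1 : a - 1 ∈ p := (hmem _).2 (by omega)
      rw [getD_snoc, if_pos (by omega), getD_snoc, if_pos (by omega)]
      rw [pos_ins_ne hs_le hn hmnotin haP, pos_ins_ne hs_le hn hmnotin haP1]
      rw [← hadj a ha1 ha3]
      have hne : pos p (a-1) ≠ pos p a :=
        pos_ne_pos hn haP1 haP (by omega)
      obtain ⟨hpa1, hpa2⟩ := pos_spec haP
      obtain ⟨hpb1, hpb2⟩ := pos_spec haP1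
      by_cases c1 : pos p a < s
      · by_cases c2 : pos p (a-1) < s
        · rw [if_pos c2, if_pos c1]
        · rw [if_neg c2, if_pos c1]
          constructor
          · intro h; omega
          · intro h
            exfalso
            apply hs_act
            refine ⟨pos p (a-1), by omega, by omega, by omega, ?_⟩
            rw [hpb2]
            have e : s - 1 = pos p a := by omega
            rw [e, hpa2]
            omega
      · by_cases c2 : pos p (a-1) < s
        · rw [if_pos c2, if_neg c1]
          constructor <;> (intro h; omega)
        · rw [if_neg c2, if_neg c1]
          constructor <;> (intro h; omega)

theorem build_nil : build [] = [] := rfl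

theorem build_snoc (x : List ℕ) (v : ℕ) :
    build (x ++ [v]) = ins (site (build x) v) x.length (build x) := by
  unfold build
  rw [List.reverse_append]
  simp only [List.reverse_cons, List.reverse_nil, List.nil_append, List.singleton_append]
  rw [bd]
  simp [List.length_reverse]

theorem pos_single : pos [0] 0 = 0 := by
  apply pos_eq (by simp) (i := 0) (by simp)
  rfl

theorem inv_base : Inv [0] [0] := by
  refine ⟨⟨rfl, by simp, ?_⟩, ?_, ?_, ?_, ?_, ?_⟩
  · intro a
    simp only [List.mem_singleton, List.length_singleton]
    omega
  · rintro ⟨i, k, hk, hik, _, _⟩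
    simp only [List.length_singleton] at hk
    omega
  · rfl
  · show cb [0] (pos [0] 0) = [0].getD 0 0
    rw [pos_single]
    rfl
  · show ¬ Blocked [0] (pos [0] 0)
    rw [pos_single]
    rintro ⟨t, ht1, ht2, ht3, ht4⟩
    omega
  · intro a h1 h2
    simp only [List.length_singleton] at h2
    omega

theorem site_nil : site [] 0 = 0 := by
  apply site_eq (by simp)
  · rintro ⟨t, ht1, ht2, ht3, ht4⟩
    omega
  · rfl

theorem build_single : build [0] = [0] := by
  have h := build_snoc [] 0
  simp only [List.nil_append] at h
  rw [h, build_nil, site_nil]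
  rfl

theorem isAscentSeq_single (h : IsAscentSeq [v]) : v = 0 := by
  have := h.1
  simpa using this

theorem inv_build (x : List ℕ) (h1 : IsAscentSeq x) (h2 : x ≠ []) : Inv x (build x) := by
  induction x using List.reverseRecOn with
  | nil => exact absurd rfl h2
  | append_singleton y v ih =>
    by_cases hy : y = []
    · subst hy
      simp only [List.nil_append] at h1 ⊢
      have := isAscentSeq_single h1
      subst this
      rw [build_single]
      exact inv_base
    · obtain ⟨hy1, hy2⟩ := (isAscentSeq_snoc hy v).mp h1
      rw [build_snoc]
      exact inv_step (ih hy1 hy) hy hy2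

theorem take_ins (hs : s ≤ p.length) : (ins s m p).take s = p.take s := by
  unfold ins
  rw [List.take_append_of_le_length (by simp [List.length_take]; omega)]
  simp

theorem drop_ins (hs : s ≤ p.length) : (ins s m p).drop (s+1) = p.drop s := by
  unfold ins
  have e : s + 1 = (p.take s).length + 1 := by simp [List.length_take]; omega
  rw [e, List.drop_length_add_append 1]
  rfl

theorem ins_inj (hs : s ≤ p.length) {p' : List ℕ} (hs' : s ≤ p'.length)
    (h : ins s m p = ins s m p') : p = p' := by
  have h1 : p.take s = p'.take s := by
    have := congrArg (List.take s) h
    rwa [take_ins hs, take_ins hs'] at this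
  have h2 : p.drop s = p'.drop s := by
    have := congrArg (List.drop (s+1)) h
    rwa [drop_ins hs, drop_ins hs'] at this
  rw [← List.take_append_drop s p, ← List.take_append_drop s p', h1, h2]

theorem build_inj : ∀ (x : List ℕ), ∀ y, IsAscentSeq x → IsAscentSeq y →
    x.length = y.length → build x = build y → x = y := by
  intro x
  induction x using List.reverseRecOn with
  | nil =>
    intro y _ _ hlen _
    rcases List.eq_nil_or_concat y with rfl | ⟨y', w, rfl⟩
    · rfl
    · rw [List.concat_eq_append] at hlen
      simp at hlen
  | append_singleton x' v ih =>
    intro y hx hy hlen h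
    rcases List.eq_nil_or_concat y with rfl | ⟨y', w, rfl⟩
    · simp at hlen
    · rw [List.concat_eq_append] at hy hlen h ⊢
      have hlen' : x'.length = y'.length := by
        simp only [List.length_append, List.length_singleton] at hlen
        omega
      by_cases hx'e : x' = []
      · have hy'e : y' = [] := by
          rw [hx'e] at hlen'
          exact List.length_eq_zero_iff.mp hlen'.symm
        subst hx'e; subst hy'e
        simp only [List.nil_append] at hx hy ⊢
        rw [isAscentSeq_single hx, isAscentSeq_single hy]
      · have hy'e : y' ≠ [] := by
          intro hc
          rw [hc] at hlen'
          exact hx'e (List.length_eq_zero_iff.mp hlen')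
        obtain ⟨hx1, hx2⟩ := (isAscentSeq_snoc hx'e v).mp hx
        obtain ⟨hy1, hy2⟩ := (isAscentSeq_snoc hy'e w).mp hy
        obtain ⟨⟨hlp, hnp, hmemp⟩, _, hNAp, _, _, _⟩ := inv_build x' hx1 hx'e
        obtain ⟨⟨hlq, hnq, hmemq⟩, _, hNAq, _, _, _⟩ := inv_build y' hy1 hy'e
        have hm : x'.length = y'.length := hlen'
        rw [build_snoc, build_snoc] at h
        have hvNA : v < NA (build x') := by omega
        have hwNA : w < NA (build y') := by omega
        obtain ⟨hs1, hs2, hs3⟩ := site_spec hvNA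
        obtain ⟨ht1, ht2, ht3⟩ := site_spec hwNA
        have hmp : x'.length ∉ build x' := fun hc => absurd ((hmemp _).1 hc) (lt_irrefl _)
        have hmq : y'.length ∉ build y' := fun hc => absurd ((hmemq _).1 hc) (lt_irrefl _)
        have e1 : pos (ins (site (build x') v) x'.length (build x')) x'.length
            = site (build x') v := pos_ins_self hs1 hnp hmp
        have e2 : pos (ins (site (build y') w) y'.length (build y')) y'.length
            = site (build y') w := pos_ins_self ht1 hnq hmq
        have hss : site (build x') v = site (build y') w := by
          rw [← e1, ← e2, h, hm]
        have hA : site (build y') w ≤ (build x').length := by omega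
        have hB : site (build y') w ≤ (build y').length := ht1
        rw [hss, hm] at h
        have hpq : build x' = build y' := ins_inj hA hB h
        have hvw : v = w := by
          rw [← hs3, ← ht3, hss, hpq]
        rw [ih y' hx1 hy1 hlen' hpq, hvw]

theorem build_surj (n : ℕ) (p : List ℕ) (hp : PermOf n p) (hR : Rl p) :
    ∃ x, x.length = n ∧ IsAscentSeq x ∧ build x = p := by
  induction n generalizing p with
  | zero =>
    obtain ⟨hl, _, _⟩ := hp
    have : p = [] := List.length_eq_zero_iff.mp hl
    exact ⟨[], rfl, ⟨rfl, by intro i h1 h2; simp at h2⟩, by rw [build_nil, this]⟩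
  | succ m ih =>
    obtain ⟨hl, hn, hmem⟩ := hp
    have hmp : m ∈ p := (hmem m).2 (by omega)
    set s := pos p m with hsdef
    obtain ⟨hs1, hs2⟩ := pos_spec hmp
    set τ := p.take s ++ p.drop (s+1) with hτdef
    have hlτ : τ.length = m := by
      simp only [hτdef, List.length_append, List.length_take, List.length_drop]
      omega
    have hlt : (p.take s).length = s := by simp [List.length_take]; omega
    have e1 : τ.take s = p.take s := by
      rw [hτdef, List.take_append_of_le_length (by omega), List.take_take, min_self]
    have e2 : τ.drop s = p.drop (s+1) := by
      calc τ.drop s = (p.take s ++ p.drop (s+1)).drop (p.take s).length := by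
            rw [hτdef, hlt]
        _ = p.drop (s+1) := List.drop_left
    have hdecomp : p = ins s m τ := by
      unfold ins
      rw [e1, e2]
      conv_lhs => rw [← List.take_append_drop s p]
      congr 1
      rw [List.drop_eq_getElem_cons hs1]
      congr 1
      rw [← List.getD_eq_getElem p 0 hs1]
      exact hs2
    have hsτ : s ≤ τ.length := by omega
    have hperm : p.Perm (m :: τ) := hdecomp ▸ perm_ins hsτ
    have hnτ : (m :: τ).Nodup := hperm.nodup hn
    have hmτ : m ∉ τ := by simp at hnτ; exact hnτ.1
    have hnτ' : τ.Nodup := by simp at hnτ; exact hnτ.2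
    have hmemτ : ∀ a, a ∈ τ ↔ a < m := by
      intro a
      constructor
      · intro h
        have ha : a ∈ p := hperm.mem_iff.mpr (List.mem_cons_of_mem _ h)
        have := (hmem a).1 ha
        have : a ≠ m := fun hc => hmτ (hc ▸ h)
        omega
      · intro h
        have : a ∈ p := (hmem a).2 (by omega)
        have := hperm.mem_iff.mp this
        rcases List.mem_cons.mp this with h' | h'
        · omega
        · exact h'
    have hbτ : ∀ b ∈ τ, b < m := fun b hb => (hmemτ b).1 hb
    have hRτ : Rl τ := by
      intro hO
      exact hR (hdecomp ▸ occ_ins hsτ hbτ hO)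
    have hsact : ¬ Blocked τ s := by
      intro hB
      exact hR (hdecomp ▸ blocked_occ hsτ hbτ hB)
    obtain ⟨y, hy1, hy2, hy3⟩ := ih τ ⟨hlτ, hnτ', hmemτ⟩ hRτ
    by_cases hm0 : m = 0
    · subst hm0
      have hτe : τ = [] := List.length_eq_zero_iff.mp hlτ
      have hse : s = 0 := by omega
      have : p = [0] := by rw [hdecomp, hτe, hse]; rfl
      exact ⟨[0], by simp [this, hl], ⟨rfl, by intro i h1 h2; simp at h2; omega⟩,
        by rw [build_single, this]⟩
    · have hye : y ≠ [] := by
        intro hc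
        rw [hc] at hy1
        simp at hy1
        omega
      obtain ⟨_, _, hNAτ, _, _, _⟩ := inv_build y hy2 hye
      rw [hy3] at hNAτ
      set v := cb τ s with hvdef
      have hvNA : v < NA τ := lt_NA hsτ hsact
      have hsite : site τ v = s := site_eq hsτ hsact rfl
      refine ⟨y ++ [v], by simp; omega, (isAscentSeq_snoc hye v).mpr ⟨hy2, by omega⟩, ?_⟩
      rw [build_snoc, hy3, hsite, hy1, hdecomp]

theorem runs_iff (hI : Inv x p) (k : ℕ) : RunsAtMost k x ↔ NoDescList k p := by
  obtain ⟨⟨hl, hn, hmem⟩, _, _, _, _, hadj⟩ := hI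
  unfold RunsAtMost NoDescList
  apply not_congr
  constructor
  · rintro ⟨i, hik, heq⟩
    set b := i + k with hbdef
    have hbn : b < x.length := hik
    have chain1 : ∀ j, j ≤ k → pos p (b - j) = pos p b + j := by
      intro j
      induction j with
      | zero => intro _; simp
      | succ j ihj =>
        intro hj
        have e := ihj (by omega)
        have hx1 : (1:ℕ) ≤ b - j := by omega
        have hx2 : b - j < x.length := by omega
        have hxeq : x.getD (b-j) 0 = x.getD (b-j-1) 0 := by
          rw [show b - j = i + (k-j) by omega]
          rw [show i + (k-j) - 1 = i + (k-j-1) by omega,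
            heq (k-j) (by omega), heq (k-j-1) (by omega)]
        have := (hadj (b-j) hx1 hx2).mpr hxeq
        have eidx : b - (j+1) = (b - j) - 1 := by omega
        rw [eidx]
        omega
    have hmemb : ∀ j ≤ k, b - j ∈ p := fun j hj => (hmem _).2 (by omega)
    have hp0 : pos p b < p.length := (pos_spec ((hmem b).2 (by omega))).1
    refine ⟨pos p b, ?_, ?_⟩
    · have := chain1 k (le_refl k)
      have := (pos_spec ((hmem (b-k)).2 (by omega))).1
      omega
    · intro j hj
      have hc := chain1 j hj
      have h1 : p.getD (pos p (b-j)) 0 = b - j := (pos_spec (hmemb j hj)).2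
      have h2 : p.getD (pos p b) 0 = b := (pos_spec ((hmem b).2 (by omega))).2
      rw [← hc, h1, h2]
  · rintro ⟨i0, hik, hvals⟩
    rw [hl] at hik
    set b := p.getD i0 0 with hbdef
    have hbmem : b ∈ p := mem_getD (by omega)
    have hbn : b < x.length := (hmem b).1 hbmem
    have hbk : k ≤ b := by
      by_contra hbk
      push_neg at hbk
      have h1 := hvals b (by omega)
      have h2 := hvals (b+1) (by omega)
      have e1 : pos p 0 = i0 + b := pos_eq hn (by omega) (by rw [h1]; omega)
      have e2 : pos p 0 = i0 + (b+1) := pos_eq hn (by omega) (by rw [h2]; omega)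
      omega
    have posj : ∀ j, j ≤ k → pos p (b - j) = i0 + j := by
      intro j hj
      exact pos_eq hn (by omega) (hvals j hj)
    have xeq : ∀ j, 1 ≤ j → j ≤ k → x.getD (b - j + 1) 0 = x.getD (b - j) 0 := by
      intro j hj1 hj2
      have ha1 : (1:ℕ) ≤ b - j + 1 := by omega
      have ha2 : b - j + 1 < x.length := by omega
      apply (hadj (b-j+1) ha1 ha2).mp
      have e1 : b - j + 1 - 1 = b - j := by omega
      rw [e1, posj j hj2, show b - j + 1 = b - (j-1) by omega, posj (j-1) (by omega)]
      omega
    have E : ∀ j, j ≤ k → x.getD (b - j) 0 = x.getD b 0 := by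
      intro j
      induction j with
      | zero => intro _; simp
      | succ j ihj =>
        intro hj
        have := ihj (by omega)
        have h2 := xeq (j+1) (by omega) hj
        rw [show b - (j+1) + 1 = b - j by omega] at h2
        rw [← this, ← h2]
    refine ⟨b - k, by omega, ?_⟩
    intro j hj
    rw [show b - k + j = b - (k - j) by omega, E (k-j) (by omega), ← E k (le_refl k)]

theorem card1 (n k : ℕ) :
    Nat.card {l : List ℕ // l.length = n ∧ IsAscentSeq l ∧ RunsAtMost k l} =
    Nat.card {p : List ℕ // PermOf n p ∧ Rl p ∧ NoDescList k p} := by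
  have hF : ∀ x : List ℕ, x.length = n → IsAscentSeq x → RunsAtMost k x →
      PermOf n (build x) ∧ Rl (build x) ∧ NoDescList k (build x) := by
    intro x h1 h2 h3
    by_cases hx : x = []
    · subst hx
      have hn0 : n = 0 := by simpa using h1.symm
      subst hn0
      rw [build_nil]
      refine ⟨⟨rfl, by simp, by simp⟩, ?_, ?_⟩
      · rintro ⟨i, k', hk, -, -, -⟩
        simp at hk
      · rintro ⟨i, hik, -⟩
        simp at hik
    · have hInv := inv_build x h2 hx
      exact ⟨h1 ▸ hInv.1, hInv.2.1, (runs_iff hInv k).mp h3⟩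
  refine Nat.card_eq_of_bijective
    (fun a => ⟨build a.1, hF a.1 a.2.1 a.2.2.1 a.2.2.2⟩) ⟨?_, ?_⟩
  · rintro ⟨x, hx⟩ ⟨y, hy⟩ h
    have hbb : build x = build y := congrArg Subtype.val h
    exact Subtype.ext (build_inj x y hx.2.1 hy.2.1 (by rw [hx.1, hy.1]) hbb)
  · rintro ⟨p, hp1, hp2, hp3⟩
    obtain ⟨x, h1, h2, h3⟩ := build_surj n p hp1 hp2
    have hrm : RunsAtMost k x := by
      by_cases hx : x = []
      · subst hx
        rintro ⟨i, hik, -⟩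
        simp at hik
      · exact (runs_iff (inv_build x h2 hx) k).mpr (h3 ▸ hp3)
    exact ⟨⟨x, h1, h2, hrm⟩, Subtype.ext h3⟩

noncomputable def toPerm {n : ℕ} (p : List ℕ) (h : PermOf n p) : Equiv.Perm (Fin n) :=
  Equiv.ofBijective (fun i => ⟨p.getD i 0, (h.2.2 _).1 (mem_getD (by rw [h.1]; exact i.2))⟩)
    (by
      rw [← Finite.injective_iff_bijective]
      intro i j hij
      have hv : p.getD (j:ℕ) 0 = p.getD (i:ℕ) 0 := (congrArg Fin.val hij).symm
      have e1 : pos p (p.getD (i:ℕ) 0) = (i:ℕ) :=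
        pos_eq h.2.1 (by rw [h.1]; exact i.2) rfl
      have e2 : pos p (p.getD (i:ℕ) 0) = (j:ℕ) :=
        pos_eq h.2.1 (by rw [h.1]; exact j.2) hv
      exact Fin.ext (by rw [← e1, ← e2]))

theorem toPerm_apply {n : ℕ} (p : List ℕ) (h : PermOf n p) (i : Fin n) :
    (toPerm p h i : ℕ) = p.getD i 0 := rfl

theorem inRset_toPerm {n : ℕ} (p : List ℕ) (h : PermOf n p) :
    InRset (toPerm p h) ↔ Rl p := by
  unfold InRset Rl
  apply not_congr
  constructor
  · rintro ⟨i, j, k', hj, hik, hv1, hv2, hv3⟩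
    rw [toPerm_apply, toPerm_apply] at hv1 hv2 hv3
    refine ⟨(i:ℕ), (k':ℕ), by rw [h.1]; exact k'.2, hik, by omega, ?_⟩
    rw [← hj]
    exact hv2
  · rintro ⟨i, k', hk, hik, hv1, hv2⟩
    rw [h.1] at hk
    refine ⟨⟨i, by omega⟩, ⟨i+1, by omega⟩, ⟨k', by omega⟩, rfl, hik, ?_, ?_, ?_⟩ <;>
      (simp only [toPerm_apply]; omega)

theorem noDescRun_toPerm {n : ℕ} (p : List ℕ) (h : PermOf n p) (k : ℕ) :
    NoDescRun k (toPerm p h) ↔ NoDescList k p := by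
  unfold NoDescRun NoDescList
  apply not_congr
  constructor
  · rintro ⟨i, hik, hval⟩
    refine ⟨i, by rw [h.1]; exact hik, ?_⟩
    intro j hj
    have := hval j hj
    rw [toPerm_apply, toPerm_apply] at this
    exact this
  · rintro ⟨i, hik, hval⟩
    rw [h.1] at hik
    refine ⟨i, hik, ?_⟩
    intro j hj
    rw [toPerm_apply, toPerm_apply]
    exact hval j hj

theorem card2 (n k : ℕ) :
    Nat.card {p : List ℕ // PermOf n p ∧ Rl p ∧ NoDescList k p} =
    Nat.card {π : Equiv.Perm (Fin n) // InRset π ∧ NoDescRun k π} := by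
  refine Nat.card_eq_of_bijective
    (fun a => ⟨toPerm a.1 a.2.1, (inRset_toPerm a.1 a.2.1).mpr a.2.2.1,
      (noDescRun_toPerm a.1 a.2.1 k).mpr a.2.2.2⟩) ⟨?_, ?_⟩
  · rintro ⟨p, hp⟩ ⟨q, hq⟩ h
    have hpq : toPerm p hp.1 = toPerm q hq.1 := congrArg Subtype.val h
    apply Subtype.ext
    apply List.ext_getElem (by rw [hp.1.1, hq.1.1])
    intro idx h1 h2
    have := congrArg (fun e => (e ⟨idx, by rw [← hp.1.1]; exact h1⟩ : Fin n)) hpq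
    have hv : p.getD idx 0 = q.getD idx 0 := congrArg Fin.val this
    rwa [List.getD_eq_getElem _ _ h1, List.getD_eq_getElem _ _ h2] at hv
  · rintro ⟨π, h1, h2⟩
    set p := List.ofFn (fun i : Fin n => (π i : ℕ)) with hpdef
    have hlen : p.length = n := by simp [hpdef]
    have hget : ∀ i : Fin n, p.getD (i:ℕ) 0 = (π i : ℕ) := by
      intro i
      rw [List.getD_eq_getElem _ _ (by rw [hlen]; exact i.2)]
      simp [hpdef]
    have hperm : PermOf n p := by
      refine ⟨hlen, ?_, ?_⟩
      · rw [hpdef, List.nodup_ofFn]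
        intro i j hij
        exact π.injective (Fin.ext hij)
      · intro a
        constructor
        · intro ha
          rw [hpdef, List.mem_ofFn] at ha
          obtain ⟨i, hi⟩ := ha
          rw [← hi]
          exact (π i).2
        · intro ha
          rw [hpdef, List.mem_ofFn]
          exact ⟨π.symm ⟨a, ha⟩, by simp⟩
    have heq : toPerm p hperm = π := by
      apply Equiv.ext
      intro i
      apply Fin.ext
      rw [toPerm_apply, hget]
    refine ⟨⟨p, hperm, ?_, ?_⟩, ?_⟩
    · exact (inRset_toPerm p hperm).mp (by rw [heq]; exact h1)
    · exact (noDescRun_toPerm p hperm k).mp (by rw [heq]; exact h2)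
    · exact Subtype.ext heq

end lemmas


end S14
/-- `|A_n^(k)| = |R_n^(k)|`. -/
theorem stmt_14 (n k : ℕ) (hk : 1 ≤ k) :
    Nat.card {l : List ℕ // l.length = n ∧ IsAscentSeq l ∧ RunsAtMost k l} =
      Nat.card {π : Equiv.Perm (Fin n) // InRset π ∧ NoDescRun k π} := by
  exact (S14.card1 n k).trans (S14.card2 n k)
end

section
/- For all integers n ≥ 0 and k ≥ 1, the number of isomorphism classes of n-element (2+2)-free posets P with maxindist(P) ≤ k equals the number of matrices in M_n^(k). -/
noncomputable section
namespace S18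
open scoped Classical
open Finset

variable {n : ℕ}

lemma plt_iff (P : PartialOrder (Fin n)) {a b : Fin n} :
    P.lt a b ↔ P.le a b ∧ ¬ P.le b a := P.lt_iff_le_not_ge a b

lemma ple_of_lt (P : PartialOrder (Fin n)) {a b : Fin n} (h : P.lt a b) : P.le a b :=
  ((plt_iff P).1 h).1

lemma plt_of_le_of_lt (P : PartialOrder (Fin n)) {a b c : Fin n}
    (h : P.le a b) (h' : P.lt b c) : P.lt a c := by
  rw [plt_iff] at h' ⊢
  exact ⟨P.le_trans _ _ _ h h'.1, fun hc => h'.2 (P.le_trans _ _ _ hc h)⟩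

lemma plt_of_lt_of_le (P : PartialOrder (Fin n)) {a b c : Fin n}
    (h : P.lt a b) (h' : P.le b c) : P.lt a c := by
  rw [plt_iff] at h ⊢
  exact ⟨P.le_trans _ _ _ h.1 h', fun hc => h.2 (P.le_trans _ _ _ h' hc)⟩

lemma plt_irrefl (P : PartialOrder (Fin n)) (a : Fin n) : ¬ P.lt a a := by
  rw [plt_iff]; tauto

/-- strict down-set as a Finset -/
def DF (P : PartialOrder (Fin n)) (x : Fin n) : Finset (Fin n) :=
  Finset.univ.filter (fun z => P.lt z x)

lemma mem_DF {P : PartialOrder (Fin n)} {x z : Fin n} : z ∈ DF P x ↔ P.lt z x := by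
  simp [DF]

/-- the set of strict down-sets -/
def Idown (P : PartialOrder (Fin n)) : Finset (Finset (Fin n)) :=
  Finset.univ.image (DF P)

lemma DF_mem_Idown (P : PartialOrder (Fin n)) (x : Fin n) : DF P x ∈ Idown P := by
  simp [Idown]

lemma mem_Idown {P : PartialOrder (Fin n)} {S : Finset (Fin n)} :
    S ∈ Idown P ↔ ∃ x, DF P x = S := by simp [Idown]

def dP (P : PartialOrder (Fin n)) : ℕ := (Idown P).card

/-- rank of a down-set -/
def rkS (P : PartialOrder (Fin n)) (S : Finset (Fin n)) : ℕ :=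
  ((Idown P).filter (fun T => T ⊂ S)).card

def mx (P : PartialOrder (Fin n)) (x : Fin n) : ℕ :=
  ((Idown P).filter (fun S => x ∈ S)).card

def iC (P : PartialOrder (Fin n)) (x : Fin n) : ℕ := rkS P (DF P x)
def jC (P : PartialOrder (Fin n)) (x : Fin n) : ℕ := dP P - 1 - mx P x

/-- downsets of a (2+2)-free poset form a chain -/
def DChain (P : PartialOrder (Fin n)) : Prop :=
  ∀ x y : Fin n, DF P x ⊆ DF P y ∨ DF P y ⊆ DF P x

lemma dchain_of_ttf {P : PartialOrder (Fin n)} (h : TwoTwoFree P) : DChain P := by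
  intro x y
  by_contra hc
  push_neg at hc
  obtain ⟨h1, h2⟩ := hc
  obtain ⟨a, hax, hay⟩ := Finset.not_subset.1 h1
  obtain ⟨c, hcy, hcx⟩ := Finset.not_subset.1 h2
  rw [mem_DF] at hax hay hcy hcx
  apply h
  refine ⟨a, x, c, y, hax, hcy, ?_, ?_, ?_, ?_, ?_, ?_, ?_, ?_⟩
  · exact fun hle => hay (plt_of_le_of_lt P hle hcy)
  · exact fun hle => hcx (plt_of_le_of_lt P hle hax)
  · intro hle
    by_cases h2 : P.le y a
    · have hay' : a = y := P.le_antisymm _ _ hle h2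
      subst hay'
      exact hcx (plt_of_lt_of_le P hcy (ple_of_lt P hax))
    · exact hay ((plt_iff P).2 ⟨hle, h2⟩)
  · intro hle
    exact hcx (plt_of_lt_of_le P (plt_of_lt_of_le P hcy hle) (ple_of_lt P hax))
  · intro hle
    exact hay (plt_of_lt_of_le P (plt_of_lt_of_le P hax hle) (ple_of_lt P hcy))
  · intro hle
    by_cases h2 : P.le x c
    · have hcx' : c = x := P.le_antisymm _ _ hle h2
      subst hcx'
      exact hay (plt_of_lt_of_le P hax (ple_of_lt P hcy))
    · exact hcx ((plt_iff P).2 ⟨hle, h2⟩)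
  · exact fun hle => hay (plt_of_lt_of_le P hax hle)
  · exact fun hle => hcx (plt_of_lt_of_le P hcy hle)

variable {P : PartialOrder (Fin n)}

lemma dP_pos (x : Fin n) : 0 < dP P :=
  Finset.card_pos.2 ⟨DF P x, DF_mem_Idown P x⟩

lemma rkS_lt_dP {S : Finset (Fin n)} (hS : S ∈ Idown P) : rkS P S < dP P := by
  have hsub : (Idown P).filter (fun T => T ⊂ S) ⊆ (Idown P).erase S := by
    intro T hT
    rw [Finset.mem_filter] at hT
    exact Finset.mem_erase.2 ⟨fun h => absurd (h ▸ hT.2) (lt_irrefl S), hT.1⟩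
  calc rkS P S ≤ ((Idown P).erase S).card := Finset.card_le_card hsub
    _ < dP P := by
        rw [Finset.card_erase_of_mem hS]
        have : 0 < (Idown P).card := Finset.card_pos.2 ⟨S, hS⟩
        unfold dP
        omega

lemma mx_lt_dP (x : Fin n) : mx P x < dP P := by
  have hsub : (Idown P).filter (fun S => x ∈ S) ⊆ (Idown P).erase (DF P x) := by
    intro T hT
    rw [Finset.mem_filter] at hT
    refine Finset.mem_erase.2 ⟨fun h => ?_, hT.1⟩
    subst h
    exact plt_irrefl P x (mem_DF.1 hT.2)
  calc mx P x ≤ ((Idown P).erase (DF P x)).card := Finset.card_le_card hsub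
    _ < dP P := by
        rw [Finset.card_erase_of_mem (DF_mem_Idown P x)]
        have : 0 < (Idown P).card := Finset.card_pos.2 ⟨DF P x, DF_mem_Idown P x⟩
        unfold dP
        omega

lemma rkS_mono {S T : Finset (Fin n)} (h : S ⊆ T) : rkS P S ≤ rkS P T := by
  apply Finset.card_le_card
  intro U hU
  rw [Finset.mem_filter] at hU ⊢
  exact ⟨hU.1, lt_of_lt_of_le hU.2 h⟩

lemma rkS_strict_mono {S T : Finset (Fin n)} (hS : S ∈ Idown P) (h : S ⊂ T) :
    rkS P S < rkS P T := by
  apply Finset.card_lt_card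
  constructor
  · intro U hU
    rw [Finset.mem_filter] at hU ⊢
    exact ⟨hU.1, lt_trans hU.2 h⟩
  · intro hsub
    have : S ∈ (Idown P).filter (fun T' => T' ⊂ T) := Finset.mem_filter.2 ⟨hS, h⟩
    have := hsub this
    rw [Finset.mem_filter] at this
    exact (lt_irrefl S this.2).elim

lemma rkS_le_iff (hP : DChain P) {S T : Finset (Fin n)} (hS : S ∈ Idown P)
    (hT : T ∈ Idown P) : rkS P S ≤ rkS P T ↔ S ⊆ T := by
  constructor
  · intro h
    by_contra hc
    obtain ⟨x, hx⟩ := mem_Idown.1 hS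
    obtain ⟨y, hy⟩ := mem_Idown.1 hT
    have htot := hP x y
    rw [hx, hy] at htot
    have hTS : T ⊂ S := by
      rcases htot with h1 | h1
      · exact absurd h1 hc
      · exact lt_of_le_of_ne h1 (fun he => hc (le_of_eq he.symm))
    exact absurd h (not_le.2 (rkS_strict_mono hT hTS))
  · exact rkS_mono

lemma rkS_inj (hP : DChain P) {S T : Finset (Fin n)} (hS : S ∈ Idown P)
    (hT : T ∈ Idown P) (h : rkS P S = rkS P T) : S = T :=
  Finset.Subset.antisymm ((rkS_le_iff hP hS hT).1 h.le) ((rkS_le_iff hP hT hS).1 h.ge)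

lemma rkS_surj (hP : DChain P) {t : ℕ} (ht : t < dP P) :
    ∃ S ∈ Idown P, rkS P S = t := by
  have hinj : Set.InjOn (rkS P) (Idown P) := fun S hS T hT h =>
    rkS_inj hP (by simpa using hS) (by simpa using hT) h
  have himg : (Idown P).image (rkS P) ⊆ Finset.range (dP P) := by
    intro u hu
    obtain ⟨S, hS, rfl⟩ := Finset.mem_image.1 hu
    exact Finset.mem_range.2 (rkS_lt_dP hS)
  have hcard : ((Idown P).image (rkS P)).card = dP P := Finset.card_image_of_injOn hinj
  have heq : (Idown P).image (rkS P) = Finset.range (dP P) :=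
    Finset.eq_of_subset_of_card_le himg (by rw [hcard, Finset.card_range])
  have : t ∈ (Idown P).image (rkS P) := heq ▸ Finset.mem_range.2 ht
  obtain ⟨S, hS, h⟩ := Finset.mem_image.1 this
  exact ⟨S, hS, h⟩

lemma mx_pos_of_lt {x y : Fin n} (h : P.lt x y) : 1 ≤ mx P x :=
  Finset.card_pos.2 ⟨DF P y, Finset.mem_filter.2 ⟨DF_mem_Idown P y, mem_DF.2 h⟩⟩

lemma claim1 (hP : DChain P) {x y : Fin n} (h : P.lt x y) :
    dP P - mx P x ≤ rkS P (DF P y) := by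
  have hsub : (Idown P).filter (fun S => ¬ x ∈ S) ⊆
      (Idown P).filter (fun S => S ⊂ DF P y) := by
    intro S hS
    rw [Finset.mem_filter] at hS ⊢
    obtain ⟨z, hz⟩ := mem_Idown.1 hS.1
    refine ⟨hS.1, ?_⟩
    have htot := hP z y
    rw [hz] at htot
    rcases htot with h1 | h1
    · exact lt_of_le_of_ne h1 (fun he => hS.2 (he ▸ mem_DF.2 h))
    · exact absurd (h1 (mem_DF.2 h)) hS.2
  have hcards := Finset.card_filter_add_card_filter_not
    (s := Idown P) (p := fun S => x ∈ S)
  have := Finset.card_le_card hsub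
  unfold rkS mx dP at *
  omega

lemma claim2 {x y : Fin n} (h : ¬ P.lt x y) :
    rkS P (DF P y) + mx P x + 1 ≤ dP P := by
  have hx : x ∉ DF P y := fun hc => h (mem_DF.1 hc)
  set A := (Idown P).filter (fun S => S ⊂ DF P y) with hA
  set B := (Idown P).filter (fun S => x ∈ S) with hB
  have hdisj : Disjoint A B := by
    rw [Finset.disjoint_left]
    intro S hSA hSB
    rw [hA, Finset.mem_filter] at hSA
    rw [hB, Finset.mem_filter] at hSB
    exact hx (hSA.2.1 hSB.2)
  have hsub : A ∪ B ⊆ (Idown P).erase (DF P y) := by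
    intro S hS
    rcases Finset.mem_union.1 hS with h1 | h1
    · rw [hA, Finset.mem_filter] at h1
      exact Finset.mem_erase.2 ⟨fun he => absurd (he ▸ h1.2) (lt_irrefl _), h1.1⟩
    · rw [hB, Finset.mem_filter] at h1
      exact Finset.mem_erase.2 ⟨fun he => hx (he ▸ h1.2), h1.1⟩
  have hc := Finset.card_le_card hsub
  rw [Finset.card_union_of_disjoint hdisj,
    Finset.card_erase_of_mem (DF_mem_Idown P y)] at hc
  have hd : 0 < dP P := dP_pos y
  rw [hA, hB] at hc
  unfold rkS mx dP at *
  omega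

lemma iC_le_jC (x : Fin n) : iC P x ≤ jC P x := by
  have h := claim2 (x := x) (y := x) (plt_irrefl P x)
  unfold iC jC
  omega

lemma jC_lt_dP (x : Fin n) : jC P x < dP P := by
  have := dP_pos (P := P) x
  unfold jC
  omega

lemma iC_lt_dP (x : Fin n) : iC P x < dP P := rkS_lt_dP (DF_mem_Idown P x)

/-- Core structure lemma: comparability is determined by coordinates. -/
lemma lt_iff_coords (hP : DChain P) (x y : Fin n) :
    P.lt x y ↔ jC P x < iC P y := by
  constructor
  · intro h
    have h1 := claim1 hP h
    have h2 := mx_pos_of_lt h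
    have h3 := mx_lt_dP (P := P) x
    unfold jC iC
    omega
  · intro h
    by_contra hc
    have h1 := claim2 hc
    have h2 := rkS_lt_dP (DF_mem_Idown P y)
    unfold jC iC at h
    omega

/-- Indistinguishability is equivalent to having equal coordinates. -/
lemma indist_iff_coords (hP : DChain P) (x y : Fin n) :
    Indist P x y ↔ iC P x = iC P y ∧ jC P x = jC P y := by
  constructor
  · rintro ⟨h1, h2⟩
    have hDF : DF P x = DF P y := by
      ext z
      rw [mem_DF, mem_DF]
      exact h1 z
    refine ⟨by rw [iC, hDF, iC], ?_⟩
    by_contra hne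
    have key : ∀ t, t < dP P → (jC P x < t ↔ jC P y < t) := by
      intro t ht
      obtain ⟨S, hS, hrk⟩ := rkS_surj hP ht
      obtain ⟨z, hz⟩ := mem_Idown.1 hS
      have hiz : iC P z = t := by rw [iC, hz, hrk]
      rw [← hiz, ← lt_iff_coords hP x z, ← lt_iff_coords hP y z]
      exact h2 z
    rcases Nat.lt_or_ge (jC P x) (jC P y) with h | h
    · exact absurd ((key _ (jC_lt_dP y)).1 h) (lt_irrefl _)
    · have h' : jC P y < jC P x := lt_of_le_of_ne h (fun he => hne he.symm)
      exact absurd ((key _ (jC_lt_dP x)).2 h') (lt_irrefl _)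
  · rintro ⟨h1, h2⟩
    have hDF : DF P x = DF P y :=
      rkS_inj hP (DF_mem_Idown P x) (DF_mem_Idown P y) h1
    constructor
    · intro z
      rw [← mem_DF, ← mem_DF, hDF]
    · intro z
      rw [lt_iff_coords hP x z, lt_iff_coords hP y z, h2]

lemma classSize_eq_filter (P : PartialOrder (Fin n)) (x : Fin n) :
    classSize P x = (Finset.univ.filter (fun y => Indist P x y)).card := by
  rw [classSize, Nat.card_eq_fintype_card, Fintype.card_subtype]

/-- The canonical matrix of a poset. -/
def matNormal (P : PartialOrder (Fin n)) : Σ d : ℕ, Matrix (Fin d) (Fin d) ℕ :=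
  ⟨dP P, fun a b =>
    (Finset.univ.filter (fun x : Fin n => iC P x = (a : ℕ) ∧ jC P x = (b : ℕ))).card⟩

lemma matNormal_snd (P : PartialOrder (Fin n)) (a b : Fin (matNormal P).1) :
    (matNormal P).2 a b =
      (Finset.univ.filter
        (fun x : Fin n => iC P x = (a : ℕ) ∧ jC P x = (b : ℕ))).card := rfl

lemma classSize_eq_entry (hP : DChain P) (x : Fin n) :
    classSize P x =
      (matNormal P).2 ⟨iC P x, iC_lt_dP x⟩ ⟨jC P x, jC_lt_dP x⟩ := by
  rw [classSize_eq_filter, matNormal_snd]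
  congr 1
  apply Finset.filter_congr
  intro y _
  simp only [indist_iff_coords hP, eq_comm, Fin.val_mk, eq_iff_iff]

lemma entry_nonzero_exists {a b : Fin (dP P)}
    (h : (matNormal P).2 a b ≠ 0) :
    ∃ x : Fin n, iC P x = (a : ℕ) ∧ jC P x = (b : ℕ) := by
  change (Finset.univ.filter (fun x : Fin n => iC P x = (a : ℕ) ∧ jC P x = (b : ℕ))).card ≠ 0 at h
  obtain ⟨x, hx⟩ := Finset.card_pos.1 (Nat.pos_of_ne_zero h)
  rw [Finset.mem_filter] at hx
  exact ⟨x, hx.2⟩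

lemma maxindist_iff_entries (hP : DChain P) (k : ℕ) :
    MaxindistLe P k ↔ EntriesLe k (matNormal P) := by
  constructor
  · intro h a b
    by_cases hz : (matNormal P).2 a b = 0
    · simp [hz]
    · obtain ⟨x, hx1, hx2⟩ := entry_nonzero_exists hz
      have : (matNormal P).2 a b = classSize P x := by
        rw [classSize_eq_entry hP x, matNormal_snd, matNormal_snd]
        simp only [Fin.val_mk, hx1, hx2]
      rw [this]
      exact h x
  · intro h x
    rw [classSize_eq_entry hP x]
    exact h _ _

lemma exists_iC_eq (hP : DChain P) {t : ℕ} (ht : t < dP P) :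
    ∃ x : Fin n, iC P x = t := by
  obtain ⟨S, hS, hrk⟩ := rkS_surj hP ht
  obtain ⟨x, hx⟩ := mem_Idown.1 hS
  exact ⟨x, by rw [iC, hx, hrk]⟩

lemma exists_jC_eq (hP : DChain P) {t : ℕ} (ht : t < dP P) :
    ∃ x : Fin n, jC P x = t := by
  rcases Nat.lt_or_ge t (dP P - 1) with hlt | hge
  · obtain ⟨S, hS, hrkS⟩ := rkS_surj hP (by omega : t < dP P)
    obtain ⟨T, hT, hrkT⟩ := rkS_surj hP (by omega : t + 1 < dP P)
    have hST : S ⊂ T := by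
      have hsub : S ⊆ T := (rkS_le_iff hP hS hT).1 (by omega)
      refine lt_of_le_of_ne hsub (fun he => ?_)
      rw [he, hrkT] at hrkS
      omega
    obtain ⟨x, hxT, hxS⟩ := Finset.exists_of_ssubset hST
    obtain ⟨y, hy⟩ := mem_Idown.1 hT
    obtain ⟨y', hy'⟩ := mem_Idown.1 hS
    have h1 : P.lt x y := mem_DF.1 (hy ▸ hxT)
    have h2 : ¬ P.lt x y' := fun hc => hxS (hy' ▸ mem_DF.2 hc)
    rw [lt_iff_coords hP] at h1 h2
    have hiy : iC P y = t + 1 := by rw [iC, hy, hrkT]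
    have hiy' : iC P y' = t := by rw [iC, hy', hrkS]
    rw [hiy] at h1
    rw [hiy'] at h2
    exact ⟨x, by omega⟩
  · have ht' : t = dP P - 1 := by omega
    obtain ⟨x, hx⟩ := exists_iC_eq hP (by omega : dP P - 1 < dP P)
    have h1 := iC_le_jC (P := P) x
    have h2 := jC_lt_dP (P := P) x
    exact ⟨x, by omega⟩

lemma matNormal_inMatM (hP : DChain P) : InMatM n (matNormal P) := by
  refine ⟨?_, ?_, ?_, ?_⟩
  · intro a b hba
    by_contra hz
    obtain ⟨x, hx1, hx2⟩ := entry_nonzero_exists hz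
    have := iC_le_jC (P := P) x
    omega
  · intro a
    obtain ⟨x, hx⟩ := exists_iC_eq hP a.isLt
    refine ⟨⟨jC P x, jC_lt_dP x⟩, ?_⟩
    rw [matNormal_snd]
    exact Finset.card_ne_zero_of_mem
      (Finset.mem_filter.2 ⟨Finset.mem_univ x, hx, rfl⟩)
  · intro b
    obtain ⟨x, hx⟩ := exists_jC_eq hP b.isLt
    refine ⟨⟨iC P x, iC_lt_dP x⟩, ?_⟩
    rw [matNormal_snd]
    exact Finset.card_ne_zero_of_mem
      (Finset.mem_filter.2 ⟨Finset.mem_univ x, rfl, hx⟩)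
  · have hfib := Finset.card_eq_sum_card_fiberwise
      (f := fun x : Fin n => ((⟨iC P x, iC_lt_dP x⟩ : Fin (dP P)),
        (⟨jC P x, jC_lt_dP x⟩ : Fin (dP P))))
      (s := Finset.univ) (t := Finset.univ) (fun x _ => Finset.mem_univ _)
    rw [Finset.card_univ, Fintype.card_fin] at hfib
    show (∑ i : Fin (dP P), ∑ j : Fin (dP P),
      (Finset.univ.filter (fun x : Fin n => iC P x = (i : ℕ) ∧ jC P x = (j : ℕ))).card) = n
    rw [← Fintype.sum_prod_type']
    conv_rhs => rw [hfib]
    apply Finset.sum_congr rfl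
    intro p _
    congr 1
    apply Finset.filter_congr
    intro x _
    simp only [Prod.ext_iff, Fin.ext_iff, Fin.val_mk, eq_iff_iff]


lemma sigma_mat_ext {d₁ d₂ : ℕ} {f : Matrix (Fin d₁) (Fin d₁) ℕ}
    {g : Matrix (Fin d₂) (Fin d₂) ℕ} (hd : d₁ = d₂)
    (h : ∀ (a b : ℕ) (ha : a < d₁) (hb : b < d₁) (ha' : a < d₂) (hb' : b < d₂),
      f ⟨a, ha⟩ ⟨b, hb⟩ = g ⟨a, ha'⟩ ⟨b, hb'⟩) :
    (⟨d₁, f⟩ : Σ d : ℕ, Matrix (Fin d) (Fin d) ℕ) = ⟨d₂, g⟩ := by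
  subst hd
  simp only [Sigma.mk.inj_iff, heq_eq_eq, true_and]
  funext a b
  have := h a b a.isLt b.isLt a.isLt b.isLt
  simpa using this

lemma ttf_of_dchain (hP : DChain P) : TwoTwoFree P := by
  rintro ⟨a, b, c, d, hab, hcd, h1, h2, h3, h4, h5, h6, h7, h8⟩
  rcases hP b d with h | h
  · exact h3 (ple_of_lt P (mem_DF.1 (h (mem_DF.2 hab))))
  · exact h6 (ple_of_lt P (mem_DF.1 (h (mem_DF.2 hcd))))

section Invariance

variable {Q : PartialOrder (Fin n)} {e : Fin n ≃ Fin n}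
  (he : ∀ a b, P.le a b ↔ Q.le (e a) (e b))

include he

lemma iso_lt (a b : Fin n) : P.lt a b ↔ Q.lt (e a) (e b) := by
  simp only [plt_iff (P := P), plt_iff (P := Q), he]

lemma iso_DF (x : Fin n) : DF Q (e x) = (DF P x).image e := by
  ext z
  rw [mem_DF, Finset.mem_image]
  constructor
  · intro h
    exact ⟨e.symm z, mem_DF.2 ((iso_lt he _ x).2 (by simpa using h)),
      e.apply_symm_apply z⟩
  · rintro ⟨w, hw, rfl⟩
    exact (iso_lt he w x).1 (mem_DF.1 hw)

lemma iso_Idown : Idown Q = (Idown P).image (fun S => S.image e) := by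
  ext S
  rw [mem_Idown, Finset.mem_image]
  constructor
  · rintro ⟨y, rfl⟩
    exact ⟨DF P (e.symm y), DF_mem_Idown _ _, by
      rw [← iso_DF he, e.apply_symm_apply]⟩
  · rintro ⟨T, hT, rfl⟩
    obtain ⟨x, rfl⟩ := mem_Idown.1 hT
    exact ⟨e x, iso_DF he x⟩

lemma iso_dP : dP Q = dP P := by
  rw [dP, dP, iso_Idown he,
    Finset.card_image_of_injective _ (Finset.image_injective e.injective)]

omit he in
lemma image_ssubset_iff {S T : Finset (Fin n)} :
    S.image e ⊂ T.image e ↔ S ⊂ T := by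
  rw [Finset.ssubset_iff_subset_ne, Finset.ssubset_iff_subset_ne,
    Finset.image_subset_image_iff e.injective]
  simp only [ne_eq, (Finset.image_injective e.injective).eq_iff]

lemma iso_rkS {S : Finset (Fin n)} : rkS Q (S.image e) = rkS P S := by
  rw [rkS, rkS, iso_Idown he, Finset.filter_image]
  rw [Finset.card_image_of_injective _ (Finset.image_injective e.injective)]
  congr 1
  apply Finset.filter_congr
  intro T _
  exact image_ssubset_iff (e := e)

lemma iso_mx (x : Fin n) : mx Q (e x) = mx P x := by
  rw [mx, mx, iso_Idown he, Finset.filter_image]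
  rw [Finset.card_image_of_injective _ (Finset.image_injective e.injective)]
  congr 1
  apply Finset.filter_congr
  intro T _
  constructor
  · intro h
    obtain ⟨w, hw, hwe⟩ := Finset.mem_image.1 h
    rwa [e.injective hwe] at hw
  · intro h
    exact Finset.mem_image_of_mem _ h

lemma iso_iC (x : Fin n) : iC Q (e x) = iC P x := by
  rw [iC, iC, iso_DF he, iso_rkS he]

lemma iso_jC (x : Fin n) : jC Q (e x) = jC P x := by
  rw [jC, jC, iso_dP he, iso_mx he]

lemma iso_matNormal : matNormal P = matNormal Q := by
  have hd : dP P = dP Q := (iso_dP he).symm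
  have key : ∀ a b : ℕ,
      (Finset.univ.filter (fun x : Fin n => iC P x = a ∧ jC P x = b)).card =
      (Finset.univ.filter (fun y : Fin n => iC Q y = a ∧ jC Q y = b)).card := by
    intro a b
    apply Finset.card_bij (fun x _ => e x)
    · intro x hx
      rw [Finset.mem_filter] at hx ⊢
      exact ⟨Finset.mem_univ _, by rw [iso_iC he, iso_jC he]; exact hx.2⟩
    · intro x _ y _ h
      exact e.injective h
    · intro y hy
      rw [Finset.mem_filter] at hy
      refine ⟨e.symm y, Finset.mem_filter.2 ⟨Finset.mem_univ _, ?_⟩,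
        (e.apply_symm_apply y).symm ▸ rfl⟩
      rw [← iso_iC he, ← iso_jC he, e.apply_symm_apply]
      exact hy.2
  apply sigma_mat_ext hd
  intro a b ha hb ha' hb'
  simpa using key a b

end Invariance

section MatToPoset

/-- fiber of sigma fst -/
def fiberEquiv {ι : Type*} {β : ι → Type*} (p : ι) :
    {t : Σ i, β i // t.1 = p} ≃ β p where
  toFun t := t.2 ▸ t.1.2
  invFun b := ⟨⟨p, b⟩, rfl⟩
  left_inv := by rintro ⟨⟨i, b⟩, rfl⟩; rfl
  right_inv b := rfl

variable (A : Σ d : ℕ, Matrix (Fin d) (Fin d) ℕ)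

lemma card_TT (hs : (∑ i, ∑ j, A.2 i j) = n) :
    Fintype.card (Fin n) = Fintype.card (Σ p : Fin A.1 × Fin A.1, Fin (A.2 p.1 p.2)) := by
  rw [Fintype.card_fin, Fintype.card_sigma]
  simp only [Fintype.card_fin]
  rw [← hs]; exact (Fintype.sum_prod_type' (fun i j => A.2 i j)).symm

/-- An enumeration of `Fin n` by the cells of the matrix, with multiplicity. -/
def cf (hs : (∑ i, ∑ j, A.2 i j) = n) : Fin n → Fin A.1 × Fin A.1 :=
  fun x => (Fintype.equivOfCardEq (card_TT A hs) x).1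

lemma cf_fiber_card (hs : (∑ i, ∑ j, A.2 i j) = n) (p : Fin A.1 × Fin A.1) :
    (Finset.univ.filter (fun x => cf A hs x = p)).card = A.2 p.1 p.2 := by
  have e1 : {x : Fin n // cf A hs x = p} ≃
      {t : Σ p : Fin A.1 × Fin A.1, Fin (A.2 p.1 p.2) // t.1 = p} :=
    (Fintype.equivOfCardEq (card_TT A hs)).subtypeEquiv (fun x => Iff.rfl)
  have e2 := e1.trans (fiberEquiv p)
  have := Fintype.card_congr e2
  rw [Fintype.card_fin] at this
  rw [← this, Fintype.card_subtype]

variable (hA : InMatM n A)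

lemma cf_cell_nonzero (x : Fin n) : A.2 (cf A hA.2.2.2 x).1 (cf A hA.2.2.2 x).2 ≠ 0 := by
  rw [← cf_fiber_card A hA.2.2.2 (cf A hA.2.2.2 x)]
  exact Finset.card_ne_zero_of_mem (Finset.mem_filter.2 ⟨Finset.mem_univ x, rfl⟩)

lemma cf_cell_le (x : Fin n) :
    ((cf A hA.2.2.2 x).1 : ℕ) ≤ ((cf A hA.2.2.2 x).2 : ℕ) := by
  by_contra hc
  exact cf_cell_nonzero A hA x (hA.1 _ _ (by omega))

lemma exists_cf_eq (p : Fin A.1 × Fin A.1) (hnz : A.2 p.1 p.2 ≠ 0) :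
    ∃ x, cf A hA.2.2.2 x = p := by
  have := cf_fiber_card A hA.2.2.2 p
  have hne : (Finset.univ.filter (fun x => cf A hA.2.2.2 x = p)).Nonempty := by
    rw [← Finset.card_pos, this]
    omega
  obtain ⟨x, hx⟩ := hne
  exact ⟨x, (Finset.mem_filter.1 hx).2⟩

lemma exists_cf_fst (r : Fin A.1) : ∃ x, (cf A hA.2.2.2 x).1 = r := by
  obtain ⟨j, hj⟩ := hA.2.1 r
  obtain ⟨x, hx⟩ := exists_cf_eq A hA (r, j) hj
  exact ⟨x, by rw [hx]⟩

lemma exists_cf_snd (c : Fin A.1) : ∃ x, (cf A hA.2.2.2 x).2 = c := by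
  obtain ⟨i, hi⟩ := hA.2.2.1 c
  obtain ⟨x, hx⟩ := exists_cf_eq A hA (i, c) hi
  exact ⟨x, by rw [hx]⟩

/-- the order relation associated with a matrix -/
def mrel (x y : Fin n) : Prop :=
  x = y ∨ ((cf A hA.2.2.2 x).2 : ℕ) < ((cf A hA.2.2.2 y).1 : ℕ)

/-- The poset associated with a matrix. -/
def matPoset : PartialOrder (Fin n) where
  le := mrel A hA
  lt x y := mrel A hA x y ∧ ¬ mrel A hA y x
  lt_iff_le_not_ge _ _ := Iff.rfl
  le_refl x := Or.inl rfl
  le_trans := by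
    rintro x y z (rfl | hxy) hyz
    · exact hyz
    · rcases hyz with rfl | hyz
      · exact Or.inr hxy
      · have := cf_cell_le A hA y
        exact Or.inr (by omega)
  le_antisymm := by
    rintro x y (rfl | hxy) h2
    · rfl
    · rcases h2 with rfl | hyx
      · rfl
      · have h1 := cf_cell_le A hA x
        have h2 := cf_cell_le A hA y
        omega

lemma matPoset_lt (x y : Fin n) :
    (matPoset A hA).lt x y ↔ ((cf A hA.2.2.2 x).2 : ℕ) < ((cf A hA.2.2.2 y).1 : ℕ) := by
  show mrel A hA x y ∧ ¬ mrel A hA y x ↔ _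
  rw [mrel, mrel]
  constructor
  · rintro ⟨(rfl | h1), h2⟩
    · exact absurd (Or.inl rfl) h2
    · exact h1
  · intro h
    have hle1 := cf_cell_le A hA x
    have hle2 := cf_cell_le A hA y
    refine ⟨Or.inr h, ?_⟩
    rintro (rfl | h2)
    · omega
    · omega

lemma matPoset_DF (x : Fin n) :
    DF (matPoset A hA) x =
      Finset.univ.filter
        (fun z => ((cf A hA.2.2.2 z).2 : ℕ) < ((cf A hA.2.2.2 x).1 : ℕ)) := by
  ext z
  rw [mem_DF, Finset.mem_filter, matPoset_lt]
  simp

lemma matPoset_dchain : DChain (matPoset A hA) := by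
  intro x y
  rw [matPoset_DF, matPoset_DF]
  rcases Nat.le_total ((cf A hA.2.2.2 x).1 : ℕ) ((cf A hA.2.2.2 y).1 : ℕ) with h | h
  · left
    intro z hz
    rw [Finset.mem_filter] at hz ⊢
    exact ⟨hz.1, by omega⟩
  · right
    intro z hz
    rw [Finset.mem_filter] at hz ⊢
    exact ⟨hz.1, by omega⟩

/-- canonical down-sets of a matrix poset -/
def Dset (r : Fin A.1) : Finset (Fin n) :=
  Finset.univ.filter (fun z => ((cf A hA.2.2.2 z).2 : ℕ) < (r : ℕ))

lemma matPoset_DF' (x : Fin n) :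
    DF (matPoset A hA) x = Dset A hA (cf A hA.2.2.2 x).1 := matPoset_DF A hA x

lemma Dset_ssubset {r r' : Fin A.1} (h : (r : ℕ) < (r' : ℕ)) :
    Dset A hA r ⊂ Dset A hA r' := by
  constructor
  · intro z hz
    rw [Dset, Finset.mem_filter] at hz ⊢
    exact ⟨hz.1, by omega⟩
  · intro hsub
    obtain ⟨z, hz⟩ := exists_cf_snd A hA r
    have : z ∈ Dset A hA r' := by
      rw [Dset, Finset.mem_filter]
      exact ⟨Finset.mem_univ _, by omega⟩
    have := hsub this
    rw [Dset, Finset.mem_filter] at this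
    omega

lemma Dset_ssubset_iff {r r' : Fin A.1} :
    Dset A hA r ⊂ Dset A hA r' ↔ (r : ℕ) < (r' : ℕ) := by
  constructor
  · intro h
    by_contra hc
    rcases Nat.eq_or_lt_of_le (Nat.le_of_not_lt hc) with he | hlt
    · have he' : r' = r := Fin.ext he
      rw [he'] at h
      exact lt_irrefl _ h
    · exact lt_irrefl _ (h.trans (Dset_ssubset A hA hlt))
  · exact Dset_ssubset A hA

lemma Dset_injective : Function.Injective (Dset A hA) := by
  intro r r' h
  by_contra hne
  rcases Nat.lt_or_ge (r : ℕ) (r' : ℕ) with hlt | hge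
  · exact absurd h (Dset_ssubset A hA hlt).ne
  · rcases Nat.eq_or_lt_of_le hge with he | hlt
    · exact hne (Fin.ext he).symm
    · exact absurd h.symm (Dset_ssubset A hA hlt).ne

lemma matPoset_Idown :
    Idown (matPoset A hA) = Finset.univ.image (Dset A hA) := by
  ext S
  rw [mem_Idown, Finset.mem_image]
  constructor
  · rintro ⟨x, rfl⟩
    exact ⟨(cf A hA.2.2.2 x).1, Finset.mem_univ _, (matPoset_DF' A hA x).symm⟩
  · rintro ⟨r, _, rfl⟩
    obtain ⟨x, hx⟩ := exists_cf_fst A hA r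
    exact ⟨x, by rw [matPoset_DF' A hA x, hx]⟩

lemma matPoset_dP : dP (matPoset A hA) = A.1 := by
  rw [dP, matPoset_Idown A hA,
    Finset.card_image_of_injective _ (Dset_injective A hA),
    Finset.card_univ, Fintype.card_fin]

lemma rkS_Dset (r : Fin A.1) : rkS (matPoset A hA) (Dset A hA r) = (r : ℕ) := by
  rw [rkS, matPoset_Idown A hA, Finset.filter_image,
    Finset.card_image_of_injective _ (Dset_injective A hA)]
  have : Finset.univ.filter (fun r' : Fin A.1 => Dset A hA r' ⊂ Dset A hA r) =
      Finset.Iio r := by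
    ext r'
    rw [Finset.mem_filter, Finset.mem_Iio, Dset_ssubset_iff A hA]
    exact ⟨fun h => h.2, fun h => ⟨Finset.mem_univ _, h⟩⟩
  rw [this, Fin.card_Iio]

lemma matPoset_iC (x : Fin n) :
    iC (matPoset A hA) x = ((cf A hA.2.2.2 x).1 : ℕ) := by
  rw [iC, matPoset_DF' A hA, rkS_Dset A hA]

lemma matPoset_mx (x : Fin n) :
    mx (matPoset A hA) x = A.1 - 1 - ((cf A hA.2.2.2 x).2 : ℕ) := by
  rw [mx, matPoset_Idown A hA, Finset.filter_image,
    Finset.card_image_of_injective _ (Dset_injective A hA)]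
  have : Finset.univ.filter (fun r : Fin A.1 => x ∈ Dset A hA r) =
      Finset.Ioi (cf A hA.2.2.2 x).2 := by
    ext r
    rw [Finset.mem_filter, Finset.mem_Ioi, Dset, Finset.mem_filter]
    exact ⟨fun h => h.2.2, fun h => ⟨Finset.mem_univ _, Finset.mem_univ _, h⟩⟩
  rw [this, Fin.card_Ioi]

lemma matPoset_jC (x : Fin n) :
    jC (matPoset A hA) x = ((cf A hA.2.2.2 x).2 : ℕ) := by
  have h1 := (cf A hA.2.2.2 x).2.isLt
  have h0 : 0 < A.1 := by omega
  rw [jC, matPoset_dP A hA, matPoset_mx A hA]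
  omega

lemma sigma_mat_ext' {X Y : Σ d : ℕ, Matrix (Fin d) (Fin d) ℕ} (hd : X.1 = Y.1)
    (h : ∀ (a b : ℕ) (ha : a < X.1) (hb : b < X.1) (ha' : a < Y.1) (hb' : b < Y.1),
      X.2 ⟨a, ha⟩ ⟨b, hb⟩ = Y.2 ⟨a, ha'⟩ ⟨b, hb'⟩) : X = Y := by
  obtain ⟨d1, f⟩ := X
  obtain ⟨d2, g⟩ := Y
  exact sigma_mat_ext hd h

lemma matNormal_matPoset : matNormal (matPoset A hA) = A := by
  apply sigma_mat_ext' (by rw [matNormal]; exact matPoset_dP A hA)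
  intro a b ha hb ha' hb'
  rw [matNormal_snd, ← cf_fiber_card A hA.2.2.2 (⟨a, ha'⟩, ⟨b, hb'⟩)]
  congr 1
  apply Finset.filter_congr
  intro x _
  simp only [matPoset_iC A hA, matPoset_jC A hA, Prod.ext_iff, Fin.ext_iff,
    Fin.val_mk, eq_iff_iff]

lemma matPoset_ttf : TwoTwoFree (matPoset A hA) :=
  ttf_of_dchain (matPoset_dchain A hA)

lemma matPoset_maxindist {k : ℕ} (hE : EntriesLe k A) :
    MaxindistLe (matPoset A hA) k :=
  (maxindist_iff_entries (matPoset_dchain A hA) k).2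
    (by rw [matNormal_matPoset A hA]; exact hE)

end MatToPoset

lemma exists_equiv_comp {γ : Type*} [Fintype γ] [DecidableEq γ] (f g : Fin n → γ)
    (h : ∀ c, (Finset.univ.filter (fun x => f x = c)).card =
      (Finset.univ.filter (fun x => g x = c)).card) :
    ∃ e : Fin n ≃ Fin n, ∀ x, g (e x) = f x := by
  have hcard : ∀ c, Fintype.card {x // f x = c} = Fintype.card {x // g x = c} := by
    intro c
    rw [Fintype.card_subtype, Fintype.card_subtype, h]
  refine ⟨(Equiv.sigmaFiberEquiv f).symm.trans
    ((Equiv.sigmaCongrRight (fun c => Fintype.equivOfCardEq (hcard c))).trans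
      (Equiv.sigmaFiberEquiv g)), fun x => ?_⟩
  exact ((Fintype.equivOfCardEq (hcard (f x))) ⟨x, rfl⟩).2

/-- coordinate map of a poset -/
def coordMap (P : PartialOrder (Fin n)) : Fin n → Fin (dP P) × Fin (dP P) :=
  fun x => (⟨iC P x, iC_lt_dP x⟩, ⟨jC P x, jC_lt_dP x⟩)

lemma coordMap_fiber (P : PartialOrder (Fin n)) (p : Fin (dP P) × Fin (dP P)) :
    (Finset.univ.filter (fun x => coordMap P x = p)).card =
      (matNormal P).2 p.1 p.2 := by
  show _ = (Finset.univ.filter (fun x : Fin n => iC P x = (p.1 : ℕ) ∧ jC P x = (p.2 : ℕ))).card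
  congr 1
  apply Finset.filter_congr
  intro x _
  simp only [coordMap, Prod.ext_iff, Fin.ext_iff, Fin.val_mk, eq_iff_iff]

lemma ple_iff (P : PartialOrder (Fin n)) {a b : Fin n} :
    P.le a b ↔ a = b ∨ P.lt a b := by
  constructor
  · intro h
    by_cases he : a = b
    · exact Or.inl he
    · exact Or.inr ((plt_iff P).2 ⟨h, fun hc => he (P.le_antisymm _ _ h hc)⟩)
  · rintro (rfl | h)
    · exact P.le_refl a
    · exact ple_of_lt P h

lemma exists_iso (hP : DChain P) :
    ∃ e : Fin n ≃ Fin n, ∀ a b : Fin n,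
      P.le a b ↔
        (matPoset (matNormal P) (matNormal_inMatM hP)).le (e a) (e b) := by
  obtain ⟨e, he⟩ := exists_equiv_comp (coordMap P)
    (cf (matNormal P) (matNormal_inMatM hP).2.2.2)
    (fun p => by rw [coordMap_fiber]; exact (cf_fiber_card (matNormal P) _ p).symm)
  refine ⟨e, fun a b => ?_⟩
  show P.le a b ↔ mrel (matNormal P) (matNormal_inMatM hP) (e a) (e b)
  rw [mrel, he a, he b]
  rw [ple_iff P, lt_iff_coords hP a b]
  constructor
  · rintro (rfl | h)
    · exact Or.inl rfl
    · exact Or.inr h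
  · rintro (hee | h)
    · exact Or.inl (e.injective hee)
    · exact Or.inr h


end S18
end


/-- isomorphism classes of `n`-element (2+2)-free posets `P` with
`maxindist(P) ≤ k` are equinumerous with matrices in `M_n^(k)`. -/
theorem stmt_18 (n k : ℕ) (hk : 1 ≤ k) :
    posetCount n (fun P => TwoTwoFree P ∧ MaxindistLe P k) =
      Nat.card {A : Σ d : ℕ, Matrix (Fin d) (Fin d) ℕ // InMatM n A ∧ EntriesLe k A} := by
  classical
  rw [posetCount]
  refine (Nat.card_eq_of_bijective
    (f := fun (A : {A : Σ d : ℕ, Matrix (Fin d) (Fin d) ℕ //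
        InMatM n A ∧ EntriesLe k A}) =>
      (Quotient.mk (posetSetoid n (fun P => TwoTwoFree P ∧ MaxindistLe P k))
        ⟨S18.matPoset A.1 A.2.1, S18.matPoset_ttf A.1 A.2.1,
          S18.matPoset_maxindist A.1 A.2.1 A.2.2⟩))
    ⟨?_, ?_⟩).symm
  · intro A B h
    have hiso : PosetIso (S18.matPoset A.1 A.2.1) (S18.matPoset B.1 B.2.1) :=
      Quotient.exact h
    obtain ⟨e, he⟩ := hiso
    apply Subtype.ext
    calc A.1 = S18.matNormal (S18.matPoset A.1 A.2.1) :=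
          (S18.matNormal_matPoset A.1 A.2.1).symm
      _ = S18.matNormal (S18.matPoset B.1 B.2.1) := S18.iso_matNormal he
      _ = B.1 := S18.matNormal_matPoset B.1 B.2.1
  · intro q
    refine Quotient.inductionOn q (fun Psub => ?_)
    obtain ⟨P, hTTF, hMax⟩ := Psub
    have hC : S18.DChain P := S18.dchain_of_ttf hTTF
    have hA : InMatM n (S18.matNormal P) := S18.matNormal_inMatM hC
    have hE : EntriesLe k (S18.matNormal P) :=
      (S18.maxindist_iff_entries hC k).1 hMax
    obtain ⟨e, he⟩ := S18.exists_iso hC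
    refine ⟨⟨S18.matNormal P, hA, hE⟩, ?_⟩
    apply Quotient.sound
    show PosetIso _ _
    exact ⟨e.symm, fun a b => by
      rw [he (e.symm a) (e.symm b), e.apply_symm_apply, e.apply_symm_apply]⟩
end
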